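/- If G is a planar graph with maximum degree Δ ≥ 6, then the clique number of the extended line graph L^+(G) is at most 2Δ. -/

import Mathlib

open SimpleGraph

variable {V : Type*}

/-- Four distinct vertices forming a 4-cycle in `G`. -/
def IsC4 (G : SimpleGraph V) (a b c d : V) : Prop :=
  a ≠ b ∧ a ≠ c ∧ a ≠ d ∧ b ≠ c ∧ b ≠ d ∧ c ≠ d ∧
    G.Adj a b ∧ G.Adj b c ∧ G.Adj c d ∧ G.Adj d a

/-- A proper edge coloring of `G` in which every 4-cycle is rainbow. -/
def IsBColoring (G : SimpleGraph V) {α : Type*} (C : Sym2 V → α) : Prop :=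
  (∀ a b c : V, G.Adj a b → G.Adj a c → b ≠ c → C s(a, b) ≠ C s(a, c)) ∧
  (∀ a b c d : V, IsC4 G a b c d →
    C s(a, b) ≠ C s(b, c) ∧ C s(a, b) ≠ C s(c, d) ∧ C s(a, b) ≠ C s(d, a) ∧
    C s(b, c) ≠ C s(c, d) ∧ C s(b, c) ≠ C s(d, a) ∧ C s(c, d) ≠ C s(d, a))

/-- The minimum number of colors in a B-coloring of `G`. -/
noncomputable def qB (G : SimpleGraph V) : ℕ :=
  sInf {n | ∃ C : Sym2 V → Fin n, IsBColoring G C}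

/-- `e` and `f` are opposite edges of some 4-cycle of `G`. -/
def OppC4 (G : SimpleGraph V) (e f : Sym2 V) : Prop :=
  ∃ a b c d : V, IsC4 G a b c d ∧ e = s(a, b) ∧ f = s(c, d)

/-- Two edges (as unordered pairs) share no vertex. -/
def EdgeDisjoint (e f : Sym2 V) : Prop := ∀ v : V, v ∈ e → v ∉ f

/-- The graph `F(G)` on the edges of `G`: two vertex-disjoint edges are adjacent
iff they are opposite edges of a 4-cycle of `G`. -/
def Fgraph (G : SimpleGraph V) : SimpleGraph G.edgeSet :=
  SimpleGraph.fromRel fun e f =>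
    EdgeDisjoint (e : Sym2 V) (f : Sym2 V) ∧ OppC4 G (e : Sym2 V) (f : Sym2 V)

/-- The extended line graph `L⁺(G)`: edges of `G` are adjacent if they share an
endpoint or are opposite edges of a 4-cycle of `G`. -/
def Lplus (G : SimpleGraph V) : SimpleGraph G.edgeSet :=
  SimpleGraph.fromRel fun e f =>
    (∃ v : V, v ∈ (e : Sym2 V) ∧ v ∈ (f : Sym2 V)) ∨ OppC4 G (e : Sym2 V) (f : Sym2 V)

/-- `H` is a minor of `G`, via branch sets. -/
def HasMinor {W : Type*} (G : SimpleGraph V) (H : SimpleGraph W) : Prop :=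
  ∃ B : W → Set V,
    (∀ w, (G.induce (B w)).Connected) ∧
    (∀ w₁ w₂, w₁ ≠ w₂ → Disjoint (B w₁) (B w₂)) ∧
    (∀ w₁ w₂, H.Adj w₁ w₂ → ∃ v₁ ∈ B w₁, ∃ v₂ ∈ B w₂, G.Adj v₁ v₂)

/-- Planarity via Wagner's theorem: no `K₅` minor and no `K₃,₃` minor. -/
def IsPlanar (G : SimpleGraph V) : Prop :=
  ¬ HasMinor G (completeGraph (Fin 5)) ∧
    ¬ HasMinor G (completeBipartiteGraph (Fin 3) (Fin 3))

/-- Outerplanarity: no `K₄` minor and no `K₂,₃` minor. -/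
def IsOuterplanar (G : SimpleGraph V) : Prop :=
  ¬ HasMinor G (completeGraph (Fin 4)) ∧
    ¬ HasMinor G (completeBipartiteGraph (Fin 2) (Fin 3))

/-- `G` is 2-connected: at least 3 vertices and removing any vertex leaves it connected. -/
def IsTwoConnected (G : SimpleGraph V) : Prop :=
  3 ≤ Nat.card V ∧ ∀ v : V, (G.induce {u | u ≠ v}).Connected

/-- `K₄` minus one edge, on `Fin 4` (the edge between `2` and `3` removed). -/
def K4e : SimpleGraph (Fin 4) :=
  SimpleGraph.fromRel fun x y => s(x, y) ≠ s((2 : Fin 4), (3 : Fin 4))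

/-- The chromatic index: minimum number of colors in a proper edge coloring. -/
noncomputable def chromIndex (G : SimpleGraph V) : ℕ :=
  sInf {n | ∃ C : Sym2 V → Fin n,
    ∀ a b c : V, G.Adj a b → G.Adj a c → b ≠ c → C s(a, b) ≠ C s(a, c)}

/-- `K₆` minus a perfect matching, on `Fin 6` (the matching `01, 23, 45` removed). -/
def K6mM : SimpleGraph (Fin 6) :=
  SimpleGraph.fromRel fun x y => (x : ℕ) / 2 ≠ (y : ℕ) / 2

/-- A path `v₀v₁v₂v₃` together with a vertex `4` adjacent to all four path vertices. -/
def FanGraph : SimpleGraph (Fin 5) :=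
  SimpleGraph.fromRel fun x y =>
    ((x : ℕ) + 1 = (y : ℕ) ∧ (y : ℕ) ≤ 3) ∨ (x : ℕ) = 4


namespace Aux

lemma sym2_rep (g : Sym2 V) : ∃ a b : V, g = s(a, b) := by
  induction g using Sym2.ind with
  | _ a b => exact ⟨a, b, rfl⟩

lemma sym2_eq_of_mems {a b : V} {g : Sym2 V} (ha : a ∈ g) (hb : b ∈ g) (hne : a ≠ b) :
    g = s(a, b) := by
  obtain ⟨p, q, rfl⟩ := sym2_rep g
  rw [Sym2.mem_iff] at ha hb
  rw [Sym2.eq_iff]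
  rcases ha with rfl | rfl <;> rcases hb with rfl | rfl <;> tauto

lemma pair_conn {G : SimpleGraph V} (x y : V) (h : x = y ∨ G.Adj x y) :
    (G.induce {x, y}).Connected := by
  rw [connected_iff]
  refine ⟨?_, ⟨⟨x, by simp⟩⟩⟩
  rintro ⟨a, ha⟩ ⟨b, hb⟩
  have key : ∀ c, c ∈ ({x, y} : Set V) → c = x ∨ c = y := by simp
  have hre : ∀ (h1 : x ∈ ({x, y} : Set V)) (h2 : y ∈ ({x, y} : Set V)),
      (G.induce {x, y}).Reachable ⟨x, h1⟩ ⟨y, h2⟩ := by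
    intro h1 h2
    rcases h with heq | hadj
    · subst heq; exact Reachable.refl _
    · exact Adj.reachable (by simpa [SimpleGraph.induce, SimpleGraph.comap_adj] using hadj)
  rcases key a ha with rfl | rfl <;> rcases key b hb with rfl | rfl
  · exact Reachable.refl _
  · exact hre _ _
  · exact (hre _ _).symm
  · exact Reachable.refl _

lemma k33_false {G : SimpleGraph V}
    (hG : ¬ HasMinor G (completeBipartiteGraph (Fin 3) (Fin 3)))
    (f g : Fin 3 ⊕ Fin 3 → V)
    (hconn : ∀ w, f w = g w ∨ G.Adj (f w) (g w))
    (hdisj : ∀ w w', w ≠ w' → (f w ≠ f w' ∧ f w ≠ g w' ∧ g w ≠ f w' ∧ g w ≠ g w'))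
    (hadj : ∀ i j : Fin 3, ∃ p q : V, (p = f (Sum.inl i) ∨ p = g (Sum.inl i)) ∧
      (q = f (Sum.inr j) ∨ q = g (Sum.inr j)) ∧ G.Adj p q) : False := by
  apply hG
  refine ⟨fun w => {f w, g w}, fun w => pair_conn _ _ (hconn w), ?_, ?_⟩
  · intro w w' hne
    obtain ⟨h1, h2, h3, h4⟩ := hdisj w w' hne
    rw [Set.disjoint_iff_forall_ne]
    rintro a ha b hb
    rcases ha with rfl | ha
    · rcases hb with rfl | hb
      · exact h1
      · rw [Set.mem_singleton_iff] at hb; subst hb; exact h2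
    · rw [Set.mem_singleton_iff] at ha; subst ha
      rcases hb with rfl | hb
      · exact h3
      · rw [Set.mem_singleton_iff] at hb; subst hb; exact h4
  · rintro (i | i) (j | j) hadj'
    · simp [completeBipartiteGraph] at hadj'
    · obtain ⟨p, q, hp, hq, hpq⟩ := hadj i j
      exact ⟨p, by rcases hp with rfl | rfl <;> simp, q, by rcases hq with rfl | rfl <;> simp, hpq⟩
    · obtain ⟨p, q, hp, hq, hpq⟩ := hadj j i
      exact ⟨q, by rcases hq with rfl | rfl <;> simp, p, by rcases hp with rfl | rfl <;> simp,
        hpq.symm⟩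
    · simp [completeBipartiteGraph] at hadj'

lemma k5_false {G : SimpleGraph V}
    (hG : ¬ HasMinor G (completeGraph (Fin 5)))
    (f g : Fin 5 → V)
    (hconn : ∀ w, f w = g w ∨ G.Adj (f w) (g w))
    (hdisj : ∀ w w', w ≠ w' → (f w ≠ f w' ∧ f w ≠ g w' ∧ g w ≠ f w' ∧ g w ≠ g w'))
    (hadj : ∀ i j : Fin 5, i ≠ j → ∃ p q : V, (p = f i ∨ p = g i) ∧
      (q = f j ∨ q = g j) ∧ G.Adj p q) : False := by
  apply hG
  refine ⟨fun w => {f w, g w}, fun w => pair_conn _ _ (hconn w), ?_, ?_⟩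
  · intro w w' hne
    obtain ⟨h1, h2, h3, h4⟩ := hdisj w w' hne
    rw [Set.disjoint_iff_forall_ne]
    rintro a ha b hb
    rcases ha with rfl | ha
    · rcases hb with rfl | hb
      · exact h1
      · rw [Set.mem_singleton_iff] at hb; subst hb; exact h2
    · rw [Set.mem_singleton_iff] at ha; subst ha
      rcases hb with rfl | hb
      · exact h3
      · rw [Set.mem_singleton_iff] at hb; subst hb; exact h4
  · intro i j hij
    have hij' : i ≠ j := by simpa [completeGraph] using hij
    obtain ⟨p, q, hp, hq, hpq⟩ := hadj i j hij'
    exact ⟨p, by rcases hp with rfl | rfl <;> simp, q, by rcases hq with rfl | rfl <;> simp, hpq⟩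



lemma edgeDisjoint_symm {e f : Sym2 V} (h : EdgeDisjoint e f) : EdgeDisjoint f e :=
  fun v hv hv' => h v hv' hv

lemma edgeDisjoint_iff {a b c d : V} :
    EdgeDisjoint (s(a, b)) (s(c, d)) ↔ a ≠ c ∧ a ≠ d ∧ b ≠ c ∧ b ≠ d := by
  constructor
  · intro h
    exact ⟨fun hh => h a (by simp) (by simp [hh]), fun hh => h a (by simp) (by simp [hh]),
      fun hh => h b (by simp) (by simp [hh]), fun hh => h b (by simp) (by simp [hh])⟩
  · rintro ⟨h1, h2, h3, h4⟩ v hv hv'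
    rw [Sym2.mem_iff] at hv hv'
    rcases hv with rfl | rfl <;> rcases hv' with h | h <;> tauto

structure GoodClique (G : SimpleGraph V) (K : Finset (Sym2 V)) : Prop where
  edge : ∀ g ∈ K, g ∈ G.edgeSet
  adj : ∀ g ∈ K, ∀ h ∈ K, g ≠ h →
    (∃ v : V, v ∈ g ∧ v ∈ h) ∨ OppC4 G g h ∨ OppC4 G h g

lemma GoodClique.cross {G : SimpleGraph V} {K : Finset (Sym2 V)} (hK : GoodClique G K)
    {a b c d : V}
    (hg : s(a, b) ∈ K) (hh : s(c, d) ∈ K)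
    (hac : a ≠ c) (had : a ≠ d) (hbc : b ≠ c) (hbd : b ≠ d) :
    (G.Adj a c ∧ G.Adj b d) ∨ (G.Adj a d ∧ G.Adj b c) := by
  have hne : s(a, b) ≠ s(c, d) := by rw [Ne, Sym2.eq_iff]; tauto
  rcases hK.adj _ hg _ hh hne with ⟨v, hv1, hv2⟩ | hopp | hopp
  · rw [Sym2.mem_iff] at hv1 hv2
    rcases hv1 with rfl | rfl <;> rcases hv2 with h | h <;> tauto
  · obtain ⟨p, q, r, s', hC4, he, hf⟩ := hopp
    obtain ⟨_, _, _, _, _, _, hpq, hqr, hrs, hsp⟩ := hC4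
    rw [Sym2.eq_iff] at he hf
    rcases he with ⟨rfl, rfl⟩ | ⟨rfl, rfl⟩ <;> rcases hf with ⟨rfl, rfl⟩ | ⟨rfl, rfl⟩
    · exact Or.inr ⟨hsp.symm, hqr⟩
    · exact Or.inl ⟨hsp.symm, hqr⟩
    · exact Or.inl ⟨hqr, hsp.symm⟩
    · exact Or.inr ⟨hqr, hsp.symm⟩
  · obtain ⟨p, q, r, s', hC4, he, hf⟩ := hopp
    obtain ⟨_, _, _, _, _, _, hpq, hqr, hrs, hsp⟩ := hC4
    rw [Sym2.eq_iff] at he hf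
    rcases he with ⟨rfl, rfl⟩ | ⟨rfl, rfl⟩ <;> rcases hf with ⟨rfl, rfl⟩ | ⟨rfl, rfl⟩
    · exact Or.inr ⟨hqr.symm, hsp⟩
    · exact Or.inl ⟨hsp, hqr.symm⟩
    · exact Or.inl ⟨hqr.symm, hsp⟩
    · exact Or.inr ⟨hsp, hqr.symm⟩

lemma star_of_intersecting [DecidableEq V] (F : Finset (Sym2 V))
    (hnd : ∀ g ∈ F, ¬ g.IsDiag)
    (hint : ∀ g ∈ F, ∀ h ∈ F, ∃ v : V, v ∈ g ∧ v ∈ h)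
    (hcard : 4 ≤ F.card) : ∃ q : V, ∀ g ∈ F, q ∈ g := by
  have hne : F.Nonempty := Finset.card_pos.mp (by omega)
  obtain ⟨g1, hg1⟩ := hne
  obtain ⟨a, b, rfl⟩ := sym2_rep g1
  have hab : a ≠ b := by intro h; exact hnd _ hg1 (by simp [h, Sym2.mk_isDiag_iff])
  by_cases hA : ∀ g ∈ F, a ∈ g
  · exact ⟨a, hA⟩
  push_neg at hA
  obtain ⟨g2, hg2, hg2a⟩ := hA
  obtain ⟨v, hv1, hv2⟩ := hint _ hg1 _ hg2
  rw [Sym2.mem_iff] at hv1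
  have hbg2 : b ∈ g2 := by
    rcases hv1 with rfl | rfl
    · exact absurd hv2 hg2a
    · exact hv2
  set c := Sym2.Mem.other hbg2 with hcdef
  have hc : s(b, c) = g2 := Sym2.other_spec hbg2
  have hcg2 : c ∈ g2 := by rw [← hc]; simp
  have hca : c ≠ a := by rintro rfl; exact hg2a hcg2
  have hbc : b ≠ c := by
    intro h
    exact hnd _ hg2 (by rw [← hc, ← h]; simp [Sym2.mk_isDiag_iff])
  by_cases hB : ∀ g ∈ F, b ∈ g
  · exact ⟨b, hB⟩
  push_neg at hB
  obtain ⟨g3, hg3, hg3b⟩ := hB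
  have hag3 : a ∈ g3 := by
    obtain ⟨w, hw1, hw2⟩ := hint _ hg1 _ hg3
    rw [Sym2.mem_iff] at hw1
    rcases hw1 with rfl | rfl
    · exact hw2
    · exact absurd hw2 hg3b
  have hcg3 : c ∈ g3 := by
    obtain ⟨w, hw1, hw2⟩ := hint _ hg2 _ hg3
    rw [← hc, Sym2.mem_iff] at hw1
    rcases hw1 with rfl | rfl
    · exact absurd hw2 hg3b
    · exact hw2
  have hg3eq : g3 = s(a, c) := sym2_eq_of_mems hag3 hcg3 hca.symm
  have hsub : F ⊆ {s(a, b), s(b, c), s(a, c)} := by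
    intro g4 hg4
    have s1 : a ∈ g4 ∨ b ∈ g4 := by
      obtain ⟨w, hw1, hw2⟩ := hint _ hg1 _ hg4
      rw [Sym2.mem_iff] at hw1
      rcases hw1 with rfl | rfl
      · exact Or.inl hw2
      · exact Or.inr hw2
    have s2 : b ∈ g4 ∨ c ∈ g4 := by
      obtain ⟨w, hw1, hw2⟩ := hint _ hg2 _ hg4
      rw [← hc, Sym2.mem_iff] at hw1
      rcases hw1 with rfl | rfl
      · exact Or.inl hw2
      · exact Or.inr hw2
    have s3 : a ∈ g4 ∨ c ∈ g4 := by
      obtain ⟨w, hw1, hw2⟩ := hint _ hg3 _ hg4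
      rw [hg3eq, Sym2.mem_iff] at hw1
      rcases hw1 with rfl | rfl
      · exact Or.inl hw2
      · exact Or.inr hw2
    simp only [Finset.mem_insert, Finset.mem_singleton]
    rcases s1 with h1 | h1
    · rcases s2 with h2 | h2
      · exact Or.inl (sym2_eq_of_mems h1 h2 hab)
      · exact Or.inr (Or.inr (sym2_eq_of_mems h1 h2 hca.symm))
    · rcases s3 with h3 | h3
      · exact Or.inl (sym2_eq_of_mems h3 h1 hab)
      · exact Or.inr (Or.inl (sym2_eq_of_mems h1 h3 hbc))
  have hle : F.card ≤ 3 := by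
    refine (Finset.card_le_card hsub).trans ?_
    refine (Finset.card_insert_le _ _).trans ?_
    have := Finset.card_insert_le (s(b, c)) ({s(a, c)} : Finset (Sym2 V))
    simp only [Finset.card_singleton] at this ⊢
    omega
  omega



set_option maxHeartbeats 2000000 in
lemma crossed_false {G : SimpleGraph V}
    (h33 : ¬ HasMinor G (completeBipartiteGraph (Fin 3) (Fin 3)))
    (a1 b1 a2 b2 a3 b3 : V)
    (r1 : G.Adj a1 b1) (r2 : G.Adj a2 b2) (r3 : G.Adj a3 b3)
    (d12 : EdgeDisjoint s(a1, b1) s(a2, b2))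
    (d13 : EdgeDisjoint s(a1, b1) s(a3, b3))
    (d23 : EdgeDisjoint s(a2, b2) s(a3, b3))
    (o2 : G.Adj a1 a2) (o2' : G.Adj b1 b2) (o3 : G.Adj a1 a3) (o3' : G.Adj b1 b3)
    (x1 : G.Adj a2 b3) (x2 : G.Adj b2 a3) : False := by
  rw [edgeDisjoint_iff] at d12 d13 d23
  obtain ⟨e1, e2, e3, e4⟩ := d12
  obtain ⟨e5, e6, e7, e8⟩ := d13
  obtain ⟨e9, e10, e11, e12⟩ := d23
  have n1 := r1.ne; have n2 := r2.ne; have n3 := r3.ne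
  refine k33_false h33 (Sum.elim ![a1, b2, b3] ![b1, a2, a3])
    (Sum.elim ![a1, b2, b3] ![b1, a2, a3]) (fun w => Or.inl rfl) ?_ ?_
  · have t : ∀ w w', w ≠ w' →
        Sum.elim ![a1, b2, b3] ![b1, a2, a3] w ≠ Sum.elim ![a1, b2, b3] ![b1, a2, a3] w' := by
      rintro (i | i) (j | j) hne <;> fin_cases i <;> fin_cases j <;>
        simp_all [Fin.ext_iff] <;> tauto
    exact fun w w' hne => ⟨t w w' hne, t w w' hne, t w w' hne, t w w' hne⟩
  · intro i j
    refine ⟨_, _, Or.inl rfl, Or.inl rfl, ?_⟩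
    fin_cases i <;> fin_cases j <;> simp
    · exact r1
    · exact o2
    · exact o3
    · exact o2'.symm
    · exact r2.symm
    · exact x2
    · exact o3'.symm
    · exact x1.symm
    · exact r3.symm


lemma edgeDisjoint_swapL {a b c d : V} (h : EdgeDisjoint s(a, b) s(c, d)) :
    EdgeDisjoint s(b, a) s(c, d) := (Sym2.eq_swap (a := a) (b := b)) ▸ h

lemma edgeDisjoint_swapR {a b c d : V} (h : EdgeDisjoint s(a, b) s(c, d)) :
    EdgeDisjoint s(a, b) s(d, c) := (Sym2.eq_swap (a := c) (b := d)) ▸ h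

lemma mem_swap {K : Finset (Sym2 V)} {a b : V} (h : s(a, b) ∈ K) : s(b, a) ∈ K :=
  (Sym2.eq_swap (a := a) (b := b)) ▸ h

set_option maxHeartbeats 2000000 in
/-- An aligned 4-matching gives a `K₃,₃` minor. -/
lemma aligned_false {G : SimpleGraph V}
    (h33 : ¬ HasMinor G (completeBipartiteGraph (Fin 3) (Fin 3)))
    (a1 b1 a2 b2 a3 b3 a4 b4 : V)
    (r1 : G.Adj a1 b1) (r2 : G.Adj a2 b2) (r3 : G.Adj a3 b3) (r4 : G.Adj a4 b4)
    (d12 : EdgeDisjoint s(a1, b1) s(a2, b2)) (d13 : EdgeDisjoint s(a1, b1) s(a3, b3))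
    (d14 : EdgeDisjoint s(a1, b1) s(a4, b4)) (d23 : EdgeDisjoint s(a2, b2) s(a3, b3))
    (d24 : EdgeDisjoint s(a2, b2) s(a4, b4)) (d34 : EdgeDisjoint s(a3, b3) s(a4, b4))
    (p12 : G.Adj a1 a2) (q12 : G.Adj b1 b2) (p13 : G.Adj a1 a3) (q13 : G.Adj b1 b3)
    (p14 : G.Adj a1 a4) (q14 : G.Adj b1 b4) (p23 : G.Adj a2 a3) (q23 : G.Adj b2 b3)
    (p24 : G.Adj a2 a4) (q24 : G.Adj b2 b4) (p34 : G.Adj a3 a4) (q34 : G.Adj b3 b4) :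
    False := by
  rw [edgeDisjoint_iff] at d12 d13 d14 d23 d24 d34
  obtain ⟨e1, e2, e3, e4⟩ := d12
  obtain ⟨e5, e6, e7, e8⟩ := d13
  obtain ⟨e9, e10, e11, e12⟩ := d14
  obtain ⟨e13, e14, e15, e16⟩ := d23
  obtain ⟨e17, e18, e19, e20⟩ := d24
  obtain ⟨e21, e22, e23, e24⟩ := d34
  have n1 := r1.ne; have n2 := r2.ne; have n3 := r3.ne; have n4 := r4.ne
  refine k33_false h33 (Sum.elim ![a1, a2, b3] ![a3, a4, b1])
    (Sum.elim ![a1, a2, b4] ![a3, a4, b2]) ?_ ?_ ?_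
  · rintro (i | i) <;> fin_cases i
    · exact Or.inl rfl
    · exact Or.inl rfl
    · exact Or.inr q34
    · exact Or.inl rfl
    · exact Or.inl rfl
    · exact Or.inr q12
  · rintro (i | i) (j | j) hne <;> fin_cases i <;> fin_cases j <;>
      refine ⟨?_, ?_, ?_, ?_⟩ <;> simp_all [Fin.ext_iff] <;> tauto
  · intro i j
    fin_cases i <;> fin_cases j
    · exact ⟨a1, a3, Or.inl rfl, Or.inl rfl, p13⟩
    · exact ⟨a1, a4, Or.inl rfl, Or.inl rfl, p14⟩
    · exact ⟨a1, b1, Or.inl rfl, Or.inl rfl, r1⟩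
    · exact ⟨a2, a3, Or.inl rfl, Or.inl rfl, p23⟩
    · exact ⟨a2, a4, Or.inl rfl, Or.inl rfl, p24⟩
    · exact ⟨a2, b2, Or.inl rfl, Or.inr rfl, r2⟩
    · exact ⟨b3, a3, Or.inl rfl, Or.inl rfl, r3.symm⟩
    · exact ⟨b4, a4, Or.inr rfl, Or.inl rfl, r4.symm⟩
    · exact ⟨b3, b1, Or.inl rfl, Or.inl rfl, q13.symm⟩

/-- No four pairwise disjoint edges in a clique of `L⁺`. -/
lemma m4_oriented {G : SimpleGraph V} {K : Finset (Sym2 V)} (hK : GoodClique G K)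
    (h33 : ¬ HasMinor G (completeBipartiteGraph (Fin 3) (Fin 3)))
    (a1 b1 a2 b2 a3 b3 a4 b4 : V)
    (m1 : s(a1, b1) ∈ K) (m2 : s(a2, b2) ∈ K) (m3 : s(a3, b3) ∈ K) (m4 : s(a4, b4) ∈ K)
    (d12 : EdgeDisjoint s(a1, b1) s(a2, b2)) (d13 : EdgeDisjoint s(a1, b1) s(a3, b3))
    (d14 : EdgeDisjoint s(a1, b1) s(a4, b4)) (d23 : EdgeDisjoint s(a2, b2) s(a3, b3))
    (d24 : EdgeDisjoint s(a2, b2) s(a4, b4)) (d34 : EdgeDisjoint s(a3, b3) s(a4, b4))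
    (p12 : G.Adj a1 a2) (q12 : G.Adj b1 b2) (p13 : G.Adj a1 a3) (q13 : G.Adj b1 b3)
    (p14 : G.Adj a1 a4) (q14 : G.Adj b1 b4) : False := by
  have r1 : G.Adj a1 b1 := G.mem_edgeSet.mp (hK.edge _ m1)
  have r2 : G.Adj a2 b2 := G.mem_edgeSet.mp (hK.edge _ m2)
  have r3 : G.Adj a3 b3 := G.mem_edgeSet.mp (hK.edge _ m3)
  have r4 : G.Adj a4 b4 := G.mem_edgeSet.mp (hK.edge _ m4)
  have c23 := hK.cross m2 m3 (edgeDisjoint_iff.mp d23).1 (edgeDisjoint_iff.mp d23).2.1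
    (edgeDisjoint_iff.mp d23).2.2.1 (edgeDisjoint_iff.mp d23).2.2.2
  rcases c23 with ⟨p23, q23⟩ | ⟨x1, x2⟩
  · have c24 := hK.cross m2 m4 (edgeDisjoint_iff.mp d24).1 (edgeDisjoint_iff.mp d24).2.1
      (edgeDisjoint_iff.mp d24).2.2.1 (edgeDisjoint_iff.mp d24).2.2.2
    rcases c24 with ⟨p24, q24⟩ | ⟨x1, x2⟩
    · have c34 := hK.cross m3 m4 (edgeDisjoint_iff.mp d34).1 (edgeDisjoint_iff.mp d34).2.1
        (edgeDisjoint_iff.mp d34).2.2.1 (edgeDisjoint_iff.mp d34).2.2.2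
      rcases c34 with ⟨p34, q34⟩ | ⟨x1, x2⟩
      · exact aligned_false h33 a1 b1 a2 b2 a3 b3 a4 b4 r1 r2 r3 r4 d12 d13 d14 d23 d24 d34
          p12 q12 p13 q13 p14 q14 p23 q23 p24 q24 p34 q34
      · exact crossed_false h33 a1 b1 a3 b3 a4 b4 r1 r3 r4 d13 d14 d34
          p13 q13 p14 q14 x1 x2
    · exact crossed_false h33 a1 b1 a2 b2 a4 b4 r1 r2 r4 d12 d14 d24 p12 q12 p14 q14 x1 x2
  · exact crossed_false h33 a1 b1 a2 b2 a3 b3 r1 r2 r3 d12 d13 d23 p12 q12 p13 q13 x1 x2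

lemma no_four {G : SimpleGraph V} {K : Finset (Sym2 V)} (hK : GoodClique G K)
    (h33 : ¬ HasMinor G (completeBipartiteGraph (Fin 3) (Fin 3)))
    {g1 g2 g3 g4 : Sym2 V}
    (m1 : g1 ∈ K) (m2 : g2 ∈ K) (m3 : g3 ∈ K) (m4 : g4 ∈ K)
    (d12 : EdgeDisjoint g1 g2) (d13 : EdgeDisjoint g1 g3) (d14 : EdgeDisjoint g1 g4)
    (d23 : EdgeDisjoint g2 g3) (d24 : EdgeDisjoint g2 g4) (d34 : EdgeDisjoint g3 g4) :
    False := by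
  obtain ⟨a1, b1, rfl⟩ := sym2_rep g1
  obtain ⟨a2, b2, rfl⟩ := sym2_rep g2
  obtain ⟨a3, b3, rfl⟩ := sym2_rep g3
  obtain ⟨a4, b4, rfl⟩ := sym2_rep g4
  have c12 := hK.cross m1 m2 (edgeDisjoint_iff.mp d12).1 (edgeDisjoint_iff.mp d12).2.1
    (edgeDisjoint_iff.mp d12).2.2.1 (edgeDisjoint_iff.mp d12).2.2.2
  have c13 := hK.cross m1 m3 (edgeDisjoint_iff.mp d13).1 (edgeDisjoint_iff.mp d13).2.1
    (edgeDisjoint_iff.mp d13).2.2.1 (edgeDisjoint_iff.mp d13).2.2.2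
  have c14 := hK.cross m1 m4 (edgeDisjoint_iff.mp d14).1 (edgeDisjoint_iff.mp d14).2.1
    (edgeDisjoint_iff.mp d14).2.2.1 (edgeDisjoint_iff.mp d14).2.2.2
  rcases c12 with ⟨p12, q12⟩ | ⟨p12, q12⟩ <;> rcases c13 with ⟨p13, q13⟩ | ⟨p13, q13⟩ <;>
    rcases c14 with ⟨p14, q14⟩ | ⟨p14, q14⟩
  · exact m4_oriented hK h33 a1 b1 a2 b2 a3 b3 a4 b4 m1 m2 m3 m4 d12 d13 d14 d23 d24 d34
      p12 q12 p13 q13 p14 q14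
  · exact m4_oriented hK h33 a1 b1 a2 b2 a3 b3 b4 a4 m1 m2 m3 (mem_swap m4) d12 d13
      (edgeDisjoint_swapR d14) d23 (edgeDisjoint_swapR d24) (edgeDisjoint_swapR d34)
      p12 q12 p13 q13 p14 q14
  · exact m4_oriented hK h33 a1 b1 a2 b2 b3 a3 a4 b4 m1 m2 (mem_swap m3) m4 d12
      (edgeDisjoint_swapR d13) d14 (edgeDisjoint_swapR d23) d24
      (edgeDisjoint_swapL d34) p12 q12 p13 q13 p14 q14
  · exact m4_oriented hK h33 a1 b1 a2 b2 b3 a3 b4 a4 m1 m2 (mem_swap m3) (mem_swap m4) d12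
      (edgeDisjoint_swapR d13) (edgeDisjoint_swapR d14) (edgeDisjoint_swapR d23)
      (edgeDisjoint_swapR d24) (edgeDisjoint_swapL (edgeDisjoint_swapR d34))
      p12 q12 p13 q13 p14 q14
  · exact m4_oriented hK h33 a1 b1 b2 a2 a3 b3 a4 b4 m1 (mem_swap m2) m3 m4
      (edgeDisjoint_swapR d12) d13 d14 (edgeDisjoint_swapL d23) (edgeDisjoint_swapL d24) d34
      p12 q12 p13 q13 p14 q14
  · exact m4_oriented hK h33 a1 b1 b2 a2 a3 b3 b4 a4 m1 (mem_swap m2) m3 (mem_swap m4)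
      (edgeDisjoint_swapR d12) d13 (edgeDisjoint_swapR d14) (edgeDisjoint_swapL d23)
      (edgeDisjoint_swapL (edgeDisjoint_swapR d24)) (edgeDisjoint_swapR d34)
      p12 q12 p13 q13 p14 q14
  · exact m4_oriented hK h33 a1 b1 b2 a2 b3 a3 a4 b4 m1 (mem_swap m2) (mem_swap m3) m4
      (edgeDisjoint_swapR d12) (edgeDisjoint_swapR d13) d14
      (edgeDisjoint_swapL (edgeDisjoint_swapR d23)) (edgeDisjoint_swapL d24)
      (edgeDisjoint_swapL d34) p12 q12 p13 q13 p14 q14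
  · exact m4_oriented hK h33 a1 b1 b2 a2 b3 a3 b4 a4 m1 (mem_swap m2) (mem_swap m3)
      (mem_swap m4) (edgeDisjoint_swapR d12) (edgeDisjoint_swapR d13)
      (edgeDisjoint_swapR d14) (edgeDisjoint_swapL (edgeDisjoint_swapR d23))
      (edgeDisjoint_swapL (edgeDisjoint_swapR d24))
      (edgeDisjoint_swapL (edgeDisjoint_swapR d34)) p12 q12 p13 q13 p14 q14


structure Prism (G : SimpleGraph V) (a1 a2 a3 b1 b2 b3 : V) : Prop where
  r1 : G.Adj a1 b1
  r2 : G.Adj a2 b2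
  r3 : G.Adj a3 b3
  p12 : G.Adj a1 a2
  p13 : G.Adj a1 a3
  p23 : G.Adj a2 a3
  q12 : G.Adj b1 b2
  q13 : G.Adj b1 b3
  q23 : G.Adj b2 b3
  d12 : EdgeDisjoint s(a1, b1) s(a2, b2)
  d13 : EdgeDisjoint s(a1, b1) s(a3, b3)
  d23 : EdgeDisjoint s(a2, b2) s(a3, b3)

variable {G : SimpleGraph V} {a1 a2 a3 b1 b2 b3 : V}

lemma Prism.swap23 (h : Prism G a1 a2 a3 b1 b2 b3) : Prism G a1 a3 a2 b1 b3 b2 :=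
  ⟨h.r1, h.r3, h.r2, h.p13, h.p12, h.p23.symm, h.q13, h.q12, h.q23.symm,
    h.d13, h.d12, edgeDisjoint_symm h.d23⟩

lemma Prism.rot (h : Prism G a1 a2 a3 b1 b2 b3) : Prism G a2 a3 a1 b2 b3 b1 :=
  ⟨h.r2, h.r3, h.r1, h.p23, h.p12.symm, h.p13.symm, h.q23, h.q12.symm, h.q13.symm,
    h.d23, edgeDisjoint_symm h.d12, edgeDisjoint_symm h.d13⟩

lemma Prism.flip (h : Prism G a1 a2 a3 b1 b2 b3) : Prism G b1 b2 b3 a1 a2 a3 :=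
  ⟨h.r1.symm, h.r2.symm, h.r3.symm, h.q12, h.q13, h.q23, h.p12, h.p13, h.p23,
    edgeDisjoint_swapL (edgeDisjoint_swapR h.d12),
    edgeDisjoint_swapL (edgeDisjoint_swapR h.d13),
    edgeDisjoint_swapL (edgeDisjoint_swapR h.d23)⟩

lemma Prism.nes (h : Prism G a1 a2 a3 b1 b2 b3) :
    a1 ≠ a2 ∧ a1 ≠ a3 ∧ a2 ≠ a3 ∧ b1 ≠ b2 ∧ b1 ≠ b3 ∧ b2 ≠ b3 ∧
    a1 ≠ b1 ∧ a1 ≠ b2 ∧ a1 ≠ b3 ∧ a2 ≠ b1 ∧ a2 ≠ b2 ∧ a2 ≠ b3 ∧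
    a3 ≠ b1 ∧ a3 ≠ b2 ∧ a3 ≠ b3 := by
  have h12 := edgeDisjoint_iff.mp h.d12
  have h13 := edgeDisjoint_iff.mp h.d13
  have h23 := edgeDisjoint_iff.mp h.d23
  exact ⟨h12.1, h13.1, h23.1, h12.2.2.2, h13.2.2.2, h23.2.2.2, h.r1.ne, h12.2.1, h13.2.1,
    (h12.2.2.1).symm, h.r2.ne, h23.2.1, (h13.2.2.1).symm, (h23.2.2.1).symm, h.r3.ne⟩

set_option maxHeartbeats 2000000 in
/-- A vertex outside the prism adjacent to `a1, b2, b3` gives a `K₃,₃` minor. -/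
lemma ban_bb (h33 : ¬ HasMinor G (completeBipartiteGraph (Fin 3) (Fin 3)))
    (hp : Prism G a1 a2 a3 b1 b2 b3) {z : V}
    (nz : z ≠ a1 ∧ z ≠ a2 ∧ z ≠ a3 ∧ z ≠ b1 ∧ z ≠ b2 ∧ z ≠ b3)
    (hza1 : G.Adj z a1) (hzb2 : G.Adj z b2) (hzb3 : G.Adj z b3) : False := by
  obtain ⟨u1, u2, u3, u4, u5, u6, u7, u8, u9, u10, u11, u12, u13, u14, u15⟩ := hp.nes
  obtain ⟨v1, v2, v3, v4, v5, v6⟩ := nz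
  refine k33_false h33 (Sum.elim ![a1, b2, a3] ![z, a2, b1])
    (Sum.elim ![a1, b2, b3] ![z, a2, b1]) ?_ ?_ ?_
  · rintro (i | i) <;> fin_cases i
    · exact Or.inl rfl
    · exact Or.inl rfl
    · exact Or.inr hp.r3
    · exact Or.inl rfl
    · exact Or.inl rfl
    · exact Or.inl rfl
  · rintro (i | i) (j | j) hne <;> fin_cases i <;> fin_cases j <;>
      refine ⟨?_, ?_, ?_, ?_⟩ <;> simp_all [Fin.ext_iff] <;> tauto
  · intro i j
    fin_cases i <;> fin_cases j
    · exact ⟨a1, z, Or.inl rfl, Or.inl rfl, hza1.symm⟩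
    · exact ⟨a1, a2, Or.inl rfl, Or.inl rfl, hp.p12⟩
    · exact ⟨a1, b1, Or.inl rfl, Or.inl rfl, hp.r1⟩
    · exact ⟨b2, z, Or.inl rfl, Or.inl rfl, hzb2.symm⟩
    · exact ⟨b2, a2, Or.inl rfl, Or.inl rfl, hp.r2.symm⟩
    · exact ⟨b2, b1, Or.inl rfl, Or.inl rfl, hp.q12.symm⟩
    · exact ⟨b3, z, Or.inr rfl, Or.inl rfl, hzb3.symm⟩
    · exact ⟨a3, a2, Or.inl rfl, Or.inl rfl, hp.p23.symm⟩
    · exact ⟨b3, b1, Or.inr rfl, Or.inl rfl, hp.q13.symm⟩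

set_option maxHeartbeats 2000000 in
/-- A vertex outside the prism adjacent to `a1, b2, a3` gives a `K₃,₃` minor. -/
lemma ban_ba (h33 : ¬ HasMinor G (completeBipartiteGraph (Fin 3) (Fin 3)))
    (hp : Prism G a1 a2 a3 b1 b2 b3) {z : V}
    (nz : z ≠ a1 ∧ z ≠ a2 ∧ z ≠ a3 ∧ z ≠ b1 ∧ z ≠ b2 ∧ z ≠ b3)
    (hza1 : G.Adj z a1) (hzb2 : G.Adj z b2) (hza3 : G.Adj z a3) : False := by
  obtain ⟨u1, u2, u3, u4, u5, u6, u7, u8, u9, u10, u11, u12, u13, u14, u15⟩ := hp.nes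
  obtain ⟨v1, v2, v3, v4, v5, v6⟩ := nz
  refine k33_false h33 (Sum.elim ![a1, b2, a3] ![z, a2, b1])
    (Sum.elim ![a1, b2, a3] ![z, a2, b3]) ?_ ?_ ?_
  · rintro (i | i) <;> fin_cases i
    · exact Or.inl rfl
    · exact Or.inl rfl
    · exact Or.inl rfl
    · exact Or.inl rfl
    · exact Or.inl rfl
    · exact Or.inr hp.q13
  · rintro (i | i) (j | j) hne <;> fin_cases i <;> fin_cases j <;>
      refine ⟨?_, ?_, ?_, ?_⟩ <;> simp_all [Fin.ext_iff] <;> tauto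
  · intro i j
    fin_cases i <;> fin_cases j
    · exact ⟨a1, z, Or.inl rfl, Or.inl rfl, hza1.symm⟩
    · exact ⟨a1, a2, Or.inl rfl, Or.inl rfl, hp.p12⟩
    · exact ⟨a1, b1, Or.inl rfl, Or.inl rfl, hp.r1⟩
    · exact ⟨b2, z, Or.inl rfl, Or.inl rfl, hzb2.symm⟩
    · exact ⟨b2, a2, Or.inl rfl, Or.inl rfl, hp.r2.symm⟩
    · exact ⟨b2, b1, Or.inl rfl, Or.inl rfl, hp.q12.symm⟩
    · exact ⟨a3, z, Or.inl rfl, Or.inl rfl, hza3.symm⟩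
    · exact ⟨a3, a2, Or.inl rfl, Or.inl rfl, hp.p23.symm⟩
    · exact ⟨a3, b3, Or.inl rfl, Or.inr rfl, hp.r3⟩

set_option maxHeartbeats 2000000 in
/-- A vertex outside the prism adjacent to `a1, a2, a3, b1` gives a `K₅` minor. -/
lemma ban_k5z (h5 : ¬ HasMinor G (completeGraph (Fin 5)))
    (hp : Prism G a1 a2 a3 b1 b2 b3) {z : V}
    (nz : z ≠ a1 ∧ z ≠ a2 ∧ z ≠ a3 ∧ z ≠ b1 ∧ z ≠ b2 ∧ z ≠ b3)
    (hza1 : G.Adj z a1) (hza2 : G.Adj z a2) (hza3 : G.Adj z a3) (hzb1 : G.Adj z b1) :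
    False := by
  obtain ⟨u1, u2, u3, u4, u5, u6, u7, u8, u9, u10, u11, u12, u13, u14, u15⟩ := hp.nes
  obtain ⟨v1, v2, v3, v4, v5, v6⟩ := nz
  refine k5_false h5 ![z, a1, b1, a2, a3] ![z, a1, b1, b2, b3] ?_ ?_ ?_
  · intro w; fin_cases w
    · exact Or.inl rfl
    · exact Or.inl rfl
    · exact Or.inl rfl
    · exact Or.inr hp.r2
    · exact Or.inr hp.r3
  · intro w w' hne; fin_cases w <;> fin_cases w' <;>
      refine ⟨?_, ?_, ?_, ?_⟩ <;> simp_all [Fin.ext_iff] <;> tauto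
  · intro i j hij
    fin_cases i <;> fin_cases j <;> first
    | exact absurd rfl hij
    | exact ⟨z, a1, Or.inl rfl, Or.inl rfl, hza1⟩
    | exact ⟨z, b1, Or.inl rfl, Or.inl rfl, hzb1⟩
    | exact ⟨z, a2, Or.inl rfl, Or.inl rfl, hza2⟩
    | exact ⟨z, a3, Or.inl rfl, Or.inl rfl, hza3⟩
    | exact ⟨a1, z, Or.inl rfl, Or.inl rfl, hza1.symm⟩
    | exact ⟨a1, b1, Or.inl rfl, Or.inl rfl, hp.r1⟩
    | exact ⟨a1, a2, Or.inl rfl, Or.inl rfl, hp.p12⟩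
    | exact ⟨a1, a3, Or.inl rfl, Or.inl rfl, hp.p13⟩
    | exact ⟨b1, z, Or.inl rfl, Or.inl rfl, hzb1.symm⟩
    | exact ⟨b1, a1, Or.inl rfl, Or.inl rfl, hp.r1.symm⟩
    | exact ⟨b1, b2, Or.inl rfl, Or.inr rfl, hp.q12⟩
    | exact ⟨b1, b3, Or.inl rfl, Or.inr rfl, hp.q13⟩
    | exact ⟨a2, z, Or.inl rfl, Or.inl rfl, hza2.symm⟩
    | exact ⟨a2, a1, Or.inl rfl, Or.inl rfl, hp.p12.symm⟩
    | exact ⟨b2, b1, Or.inr rfl, Or.inl rfl, hp.q12.symm⟩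
    | exact ⟨a2, a3, Or.inl rfl, Or.inl rfl, hp.p23⟩
    | exact ⟨a3, z, Or.inl rfl, Or.inl rfl, hza3.symm⟩
    | exact ⟨a3, a1, Or.inl rfl, Or.inl rfl, hp.p13.symm⟩
    | exact ⟨b3, b1, Or.inr rfl, Or.inl rfl, hp.q13.symm⟩
    | exact ⟨a3, a2, Or.inl rfl, Or.inl rfl, hp.p23.symm⟩

set_option maxHeartbeats 2000000 in
/-- Both diagonals of a prism square give a `K₅` minor. -/
lemma ban_chord2 (h5 : ¬ HasMinor G (completeGraph (Fin 5)))
    (hp : Prism G a1 a2 a3 b1 b2 b3)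
    (c1 : G.Adj a1 b2) (c2 : G.Adj a2 b1) : False := by
  obtain ⟨u1, u2, u3, u4, u5, u6, u7, u8, u9, u10, u11, u12, u13, u14, u15⟩ := hp.nes
  refine k5_false h5 ![a1, a2, b1, b2, a3] ![a1, a2, b1, b2, b3] ?_ ?_ ?_
  · intro w; fin_cases w
    · exact Or.inl rfl
    · exact Or.inl rfl
    · exact Or.inl rfl
    · exact Or.inl rfl
    · exact Or.inr hp.r3
  · intro w w' hne; fin_cases w <;> fin_cases w' <;>
      refine ⟨?_, ?_, ?_, ?_⟩ <;> simp_all [Fin.ext_iff] <;> tauto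
  · intro i j hij
    fin_cases i <;> fin_cases j <;> first
    | exact absurd rfl hij
    | exact ⟨a1, a2, Or.inl rfl, Or.inl rfl, hp.p12⟩
    | exact ⟨a1, b1, Or.inl rfl, Or.inl rfl, hp.r1⟩
    | exact ⟨a1, b2, Or.inl rfl, Or.inl rfl, c1⟩
    | exact ⟨a1, a3, Or.inl rfl, Or.inl rfl, hp.p13⟩
    | exact ⟨a2, a1, Or.inl rfl, Or.inl rfl, hp.p12.symm⟩
    | exact ⟨a2, b1, Or.inl rfl, Or.inl rfl, c2⟩
    | exact ⟨a2, b2, Or.inl rfl, Or.inl rfl, hp.r2⟩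
    | exact ⟨a2, a3, Or.inl rfl, Or.inl rfl, hp.p23⟩
    | exact ⟨b1, a1, Or.inl rfl, Or.inl rfl, hp.r1.symm⟩
    | exact ⟨b1, a2, Or.inl rfl, Or.inl rfl, c2.symm⟩
    | exact ⟨b1, b2, Or.inl rfl, Or.inl rfl, hp.q12⟩
    | exact ⟨b1, b3, Or.inl rfl, Or.inr rfl, hp.q13⟩
    | exact ⟨b2, a1, Or.inl rfl, Or.inl rfl, c1.symm⟩
    | exact ⟨b2, a2, Or.inl rfl, Or.inl rfl, hp.r2.symm⟩
    | exact ⟨b2, b1, Or.inl rfl, Or.inl rfl, hp.q12.symm⟩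
    | exact ⟨b2, b3, Or.inl rfl, Or.inr rfl, hp.q23⟩
    | exact ⟨a3, a1, Or.inl rfl, Or.inl rfl, hp.p13.symm⟩
    | exact ⟨a3, a2, Or.inl rfl, Or.inl rfl, hp.p23.symm⟩
    | exact ⟨b3, b1, Or.inr rfl, Or.inl rfl, hp.q13.symm⟩
    | exact ⟨b3, b2, Or.inr rfl, Or.inl rfl, hp.q23.symm⟩

set_option maxHeartbeats 2000000 in
/-- Three common neighbours of three distinct vertices give a `K₃,₃` minor. -/
lemma k33_cap (h33 : ¬ HasMinor G (completeBipartiteGraph (Fin 3) (Fin 3)))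
    (x y w z1 z2 z3 : V)
    (hxy : x ≠ y) (hxw : x ≠ w) (hyw : y ≠ w)
    (hz12 : z1 ≠ z2) (hz13 : z1 ≠ z3) (hz23 : z2 ≠ z3)
    (h1x : G.Adj z1 x) (h1y : G.Adj z1 y) (h1w : G.Adj z1 w)
    (h2x : G.Adj z2 x) (h2y : G.Adj z2 y) (h2w : G.Adj z2 w)
    (h3x : G.Adj z3 x) (h3y : G.Adj z3 y) (h3w : G.Adj z3 w) : False := by
  have n1x := h1x.ne; have n1y := h1y.ne; have n1w := h1w.ne
  have n2x := h2x.ne; have n2y := h2y.ne; have n2w := h2w.ne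
  have n3x := h3x.ne; have n3y := h3y.ne; have n3w := h3w.ne
  refine k33_false h33 (Sum.elim ![x, y, w] ![z1, z2, z3])
    (Sum.elim ![x, y, w] ![z1, z2, z3]) (fun w => Or.inl rfl) ?_ ?_
  · have t : ∀ w' w'', w' ≠ w'' →
        Sum.elim ![x, y, w] ![z1, z2, z3] w' ≠ Sum.elim ![x, y, w] ![z1, z2, z3] w'' := by
      rintro (i | i) (j | j) hne <;> fin_cases i <;> fin_cases j <;>
        simp_all [Fin.ext_iff] <;> tauto
    exact fun w' w'' hne => ⟨t w' w'' hne, t w' w'' hne, t w' w'' hne, t w' w'' hne⟩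
  · intro i j
    refine ⟨_, _, Or.inl rfl, Or.inl rfl, ?_⟩
    fin_cases i <;> fin_cases j <;> simp
    · exact h1x.symm
    · exact h2x.symm
    · exact h3x.symm
    · exact h1y.symm
    · exact h2y.symm
    · exact h3y.symm
    · exact h1w.symm
    · exact h2w.symm
    · exact h3w.symm


/-- Any three pairwise disjoint clique edges can be labelled as a prism. -/
lemma prism_of {K : Finset (Sym2 V)} (hK : GoodClique G K)
    (h33 : ¬ HasMinor G (completeBipartiteGraph (Fin 3) (Fin 3)))
    {g1 g2 g3 : Sym2 V} (m1 : g1 ∈ K) (m2 : g2 ∈ K) (m3 : g3 ∈ K)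
    (d12 : EdgeDisjoint g1 g2) (d13 : EdgeDisjoint g1 g3) (d23 : EdgeDisjoint g2 g3) :
    ∃ x1 x2 x3 y1 y2 y3 : V, Prism G x1 x2 x3 y1 y2 y3 ∧
      s(x1, y1) ∈ K ∧ s(x2, y2) ∈ K ∧ s(x3, y3) ∈ K := by
  obtain ⟨c1, e1, rfl⟩ := sym2_rep g1
  obtain ⟨c2, e2, rfl⟩ := sym2_rep g2
  obtain ⟨c3, e3, rfl⟩ := sym2_rep g3
  have r1 : G.Adj c1 e1 := G.mem_edgeSet.mp (hK.edge _ m1)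
  have r2 : G.Adj c2 e2 := G.mem_edgeSet.mp (hK.edge _ m2)
  have r3 : G.Adj c3 e3 := G.mem_edgeSet.mp (hK.edge _ m3)
  have c12 := hK.cross m1 m2 (edgeDisjoint_iff.mp d12).1 (edgeDisjoint_iff.mp d12).2.1
    (edgeDisjoint_iff.mp d12).2.2.1 (edgeDisjoint_iff.mp d12).2.2.2
  have c13 := hK.cross m1 m3 (edgeDisjoint_iff.mp d13).1 (edgeDisjoint_iff.mp d13).2.1
    (edgeDisjoint_iff.mp d13).2.2.1 (edgeDisjoint_iff.mp d13).2.2.2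
  rcases c12 with ⟨p12, q12⟩ | ⟨p12, q12⟩ <;> rcases c13 with ⟨p13, q13⟩ | ⟨p13, q13⟩
  · have c23 := hK.cross m2 m3 (edgeDisjoint_iff.mp d23).1 (edgeDisjoint_iff.mp d23).2.1
      (edgeDisjoint_iff.mp d23).2.2.1 (edgeDisjoint_iff.mp d23).2.2.2
    rcases c23 with ⟨p23, q23⟩ | ⟨x1, x2⟩
    · exact ⟨c1, c2, c3, e1, e2, e3,
        ⟨r1, r2, r3, p12, p13, p23, q12, q13, q23, d12, d13, d23⟩, m1, m2, m3⟩
    · exact absurd (crossed_false h33 c1 e1 c2 e2 c3 e3 r1 r2 r3 d12 d13 d23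
        p12 q12 p13 q13 x1 x2) id
  · -- rung 3 swapped
    have d13' := edgeDisjoint_swapR d13
    have d23' := edgeDisjoint_swapR d23
    have c23 := hK.cross m2 (mem_swap m3) (edgeDisjoint_iff.mp d23').1
      (edgeDisjoint_iff.mp d23').2.1 (edgeDisjoint_iff.mp d23').2.2.1
      (edgeDisjoint_iff.mp d23').2.2.2
    rcases c23 with ⟨p23, q23⟩ | ⟨x1, x2⟩
    · exact ⟨c1, c2, e3, e1, e2, c3,
        ⟨r1, r2, r3.symm, p12, p13, p23, q12, q13, q23, d12, d13', d23'⟩, m1, m2, mem_swap m3⟩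
    · exact absurd (crossed_false h33 c1 e1 c2 e2 e3 c3 r1 r2 r3.symm d12 d13' d23'
        p12 q12 p13 q13 x1 x2) id
  · -- rung 2 swapped
    have d12' := edgeDisjoint_swapR d12
    have d23' := edgeDisjoint_swapL d23
    have c23 := hK.cross (mem_swap m2) m3 (edgeDisjoint_iff.mp d23').1
      (edgeDisjoint_iff.mp d23').2.1 (edgeDisjoint_iff.mp d23').2.2.1
      (edgeDisjoint_iff.mp d23').2.2.2
    rcases c23 with ⟨p23, q23⟩ | ⟨x1, x2⟩
    · exact ⟨c1, e2, c3, e1, c2, e3,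
        ⟨r1, r2.symm, r3, p12, p13, p23, q12, q13, q23, d12', d13, d23'⟩,
        m1, mem_swap m2, m3⟩
    · exact absurd (crossed_false h33 c1 e1 e2 c2 c3 e3 r1 r2.symm r3 d12' d13 d23'
        p12 q12 p13 q13 x1 x2) id
  · -- rungs 2 and 3 swapped
    have d12' := edgeDisjoint_swapR d12
    have d13' := edgeDisjoint_swapR d13
    have d23' := edgeDisjoint_swapL (edgeDisjoint_swapR d23)
    have c23 := hK.cross (mem_swap m2) (mem_swap m3) (edgeDisjoint_iff.mp d23').1
      (edgeDisjoint_iff.mp d23').2.1 (edgeDisjoint_iff.mp d23').2.2.1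
      (edgeDisjoint_iff.mp d23').2.2.2
    rcases c23 with ⟨p23, q23⟩ | ⟨x1, x2⟩
    · exact ⟨c1, e2, e3, e1, c2, c3,
        ⟨r1, r2.symm, r3.symm, p12, p13, p23, q12, q13, q23, d12', d13', d23'⟩,
        m1, mem_swap m2, mem_swap m3⟩
    · exact absurd (crossed_false h33 c1 e1 e2 c2 e3 c3 r1 r2.symm r3.symm d12' d13' d23'
        p12 q12 p13 q13 x1 x2) id

/-- Structure of an outer clique edge at `a1`. -/
lemma outerA {K : Finset (Sym2 V)} (hK : GoodClique G K)
    (h33 : ¬ HasMinor G (completeBipartiteGraph (Fin 3) (Fin 3)))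
    (h5 : ¬ HasMinor G (completeGraph (Fin 5)))
    (hp : Prism G a1 a2 a3 b1 b2 b3)
    (m2 : s(a2, b2) ∈ K) (m3 : s(a3, b3) ∈ K) {z : V}
    (nz : z ≠ a1 ∧ z ≠ a2 ∧ z ≠ a3 ∧ z ≠ b1 ∧ z ≠ b2 ∧ z ≠ b3)
    (mo : s(a1, z) ∈ K) :
    G.Adj z a2 ∧ G.Adj z a3 ∧ G.Adj a1 b2 ∧ G.Adj a1 b3 ∧
      ¬G.Adj z b1 ∧ ¬G.Adj z b2 ∧ ¬G.Adj z b3 := by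
  obtain ⟨u1, u2, u3, u4, u5, u6, u7, u8, u9, u10, u11, u12, u13, u14, u15⟩ := hp.nes
  obtain ⟨v1, v2, v3, v4, v5, v6⟩ := nz
  have nz' : z ≠ a1 ∧ z ≠ a3 ∧ z ≠ a2 ∧ z ≠ b1 ∧ z ≠ b3 ∧ z ≠ b2 := ⟨v1, v3, v2, v4, v6, v5⟩
  have hza1 : G.Adj z a1 := (G.mem_edgeSet.mp (hK.edge _ mo)).symm
  have c2 := hK.cross mo m2 u1 u8 v2 v5
  have c3 := hK.cross mo m3 u2 u9 v3 v6
  have hc2 : G.Adj a1 b2 ∧ G.Adj z a2 := by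
    rcases c2 with ⟨_, hzb2⟩ | hc2
    · rcases c3 with ⟨_, hzb3⟩ | ⟨_, hza3⟩
      · exact absurd (ban_bb h33 hp ⟨v1, v2, v3, v4, v5, v6⟩ hza1 hzb2 hzb3) id
      · exact absurd (ban_ba h33 hp ⟨v1, v2, v3, v4, v5, v6⟩ hza1 hzb2 hza3) id
    · exact hc2
  have hc3 : G.Adj a1 b3 ∧ G.Adj z a3 := by
    rcases c3 with ⟨_, hzb3⟩ | hc3
    · exact absurd (ban_ba h33 hp.swap23 nz' hza1 hzb3 hc2.2) id
    · exact hc3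
  refine ⟨hc2.2, hc3.2, hc2.1, hc3.1, ?_, ?_, ?_⟩
  · intro h
    exact ban_k5z h5 hp ⟨v1, v2, v3, v4, v5, v6⟩ hza1 hc2.2 hc3.2 h
  · intro h
    exact ban_ba h33 hp ⟨v1, v2, v3, v4, v5, v6⟩ hza1 h hc3.2
  · intro h
    exact ban_ba h33 hp.swap23 nz' hza1 h hc2.2

/-- An outer edge at `a1` kills all bottom-triangle edges of the clique. -/
lemma killB {K : Finset (Sym2 V)} (hK : GoodClique G K)
    (h33 : ¬ HasMinor G (completeBipartiteGraph (Fin 3) (Fin 3)))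
    (h5 : ¬ HasMinor G (completeGraph (Fin 5)))
    (hp : Prism G a1 a2 a3 b1 b2 b3)
    (m2 : s(a2, b2) ∈ K) (m3 : s(a3, b3) ∈ K) {z : V}
    (nz : z ≠ a1 ∧ z ≠ a2 ∧ z ≠ a3 ∧ z ≠ b1 ∧ z ≠ b2 ∧ z ≠ b3)
    (mo : s(a1, z) ∈ K) :
    s(b1, b2) ∉ K ∧ s(b1, b3) ∉ K ∧ s(b2, b3) ∉ K := by
  obtain ⟨u1, u2, u3, u4, u5, u6, u7, u8, u9, u10, u11, u12, u13, u14, u15⟩ := hp.nes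
  obtain ⟨hza2, hza3, hab2, hab3, nb1, nb2, nb3⟩ := outerA hK h33 h5 hp m2 m3 nz mo
  refine ⟨fun hm => ?_, fun hm => ?_, fun hm => ?_⟩
  · rcases hK.cross mo hm u7 u8 nz.2.2.2.1 nz.2.2.2.2.1 with ⟨_, h⟩ | ⟨_, h⟩
    · exact nb2 h
    · exact nb1 h
  · rcases hK.cross mo hm u7 u9 nz.2.2.2.1 nz.2.2.2.2.2 with ⟨_, h⟩ | ⟨_, h⟩
    · exact nb3 h
    · exact nb1 h
  · rcases hK.cross mo hm u8 u9 nz.2.2.2.2.1 nz.2.2.2.2.2 with ⟨_, h⟩ | ⟨_, h⟩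
    · exact nb3 h
    · exact nb2 h

/-- Outer edges at `a1` and at `a2` are incompatible. -/
lemma conflictAA {K : Finset (Sym2 V)} (hK : GoodClique G K)
    (h33 : ¬ HasMinor G (completeBipartiteGraph (Fin 3) (Fin 3)))
    (h5 : ¬ HasMinor G (completeGraph (Fin 5)))
    (hp : Prism G a1 a2 a3 b1 b2 b3)
    (m1 : s(a1, b1) ∈ K) (m2 : s(a2, b2) ∈ K) (m3 : s(a3, b3) ∈ K) {z w : V}
    (nz : z ≠ a1 ∧ z ≠ a2 ∧ z ≠ a3 ∧ z ≠ b1 ∧ z ≠ b2 ∧ z ≠ b3)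
    (nw : w ≠ a1 ∧ w ≠ a2 ∧ w ≠ a3 ∧ w ≠ b1 ∧ w ≠ b2 ∧ w ≠ b3)
    (mo1 : s(a1, z) ∈ K) (mo2 : s(a2, w) ∈ K) : False := by
  have h1 := outerA hK h33 h5 hp m2 m3 nz mo1
  have hp' : Prism G a2 a1 a3 b2 b1 b3 := hp.rot.swap23
  have nw' : w ≠ a2 ∧ w ≠ a1 ∧ w ≠ a3 ∧ w ≠ b2 ∧ w ≠ b1 ∧ w ≠ b3 :=
    ⟨nw.2.1, nw.1, nw.2.2.1, nw.2.2.2.2.1, nw.2.2.2.1, nw.2.2.2.2.2⟩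
  have h2 := outerA hK h33 h5 hp' m1 m3 nw' mo2
  exact ban_chord2 h5 hp h1.2.2.1 h2.2.2.1

/-- Outer edges at `a1` and at `b1` are incompatible. -/
lemma conflictRung {K : Finset (Sym2 V)} (hK : GoodClique G K)
    (h33 : ¬ HasMinor G (completeBipartiteGraph (Fin 3) (Fin 3)))
    (h5 : ¬ HasMinor G (completeGraph (Fin 5)))
    (hp : Prism G a1 a2 a3 b1 b2 b3)
    (m2 : s(a2, b2) ∈ K) (m3 : s(a3, b3) ∈ K) {z w : V}
    (nz : z ≠ a1 ∧ z ≠ a2 ∧ z ≠ a3 ∧ z ≠ b1 ∧ z ≠ b2 ∧ z ≠ b3)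
    (nw : w ≠ a1 ∧ w ≠ a2 ∧ w ≠ a3 ∧ w ≠ b1 ∧ w ≠ b2 ∧ w ≠ b3)
    (mo1 : s(a1, z) ∈ K) (mo2 : s(b1, w) ∈ K) : False := by
  have h1 := outerA hK h33 h5 hp m2 m3 nz mo1
  have nw' : w ≠ b1 ∧ w ≠ b2 ∧ w ≠ b3 ∧ w ≠ a1 ∧ w ≠ a2 ∧ w ≠ a3 :=
    ⟨nw.2.2.2.1, nw.2.2.2.2.1, nw.2.2.2.2.2, nw.1, nw.2.1, nw.2.2.1⟩
  have h2 := outerA hK h33 h5 hp.flip (mem_swap m2) (mem_swap m3) nw' mo2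
  exact ban_chord2 h5 hp h1.2.2.1 h2.2.2.1.symm

/-- At most two outer clique edges at `a1`. -/
lemma out_card_le [DecidableEq V] {K : Finset (Sym2 V)} (hK : GoodClique G K)
    (h33 : ¬ HasMinor G (completeBipartiteGraph (Fin 3) (Fin 3)))
    (h5 : ¬ HasMinor G (completeGraph (Fin 5)))
    (hp : Prism G a1 a2 a3 b1 b2 b3)
    (m2 : s(a2, b2) ∈ K) (m3 : s(a3, b3) ∈ K)
    (F : Finset (Sym2 V))
    (hF : ∀ g ∈ F, g ∈ K ∧ ∃ z : V, g = s(a1, z) ∧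
      (z ≠ a1 ∧ z ≠ a2 ∧ z ≠ a3 ∧ z ≠ b1 ∧ z ≠ b2 ∧ z ≠ b3)) : F.card ≤ 2 := by
  obtain ⟨u1, u2, u3, u4, u5, u6, u7, u8, u9, u10, u11, u12, u13, u14, u15⟩ := hp.nes
  by_contra hgt
  push_neg at hgt
  obtain ⟨g1, hg1, g2, hg2, g3, hg3, hne12, hne13, hne23⟩ := Finset.two_lt_card.mp hgt
  obtain ⟨hK1, z1, rfl, nz1⟩ := hF _ hg1
  obtain ⟨hK2, z2, rfl, nz2⟩ := hF _ hg2
  obtain ⟨hK3, z3, rfl, nz3⟩ := hF _ hg3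
  have o1 := outerA hK h33 h5 hp m2 m3 nz1 hK1
  have o2 := outerA hK h33 h5 hp m2 m3 nz2 hK2
  have o3 := outerA hK h33 h5 hp m2 m3 nz3 hK3
  have hz1 : G.Adj z1 a1 := (G.mem_edgeSet.mp (hK.edge _ hK1)).symm
  have hz2 : G.Adj z2 a1 := (G.mem_edgeSet.mp (hK.edge _ hK2)).symm
  have hz3 : G.Adj z3 a1 := (G.mem_edgeSet.mp (hK.edge _ hK3)).symm
  have d12 : z1 ≠ z2 := fun h => hne12 (by rw [h])
  have d13 : z1 ≠ z3 := fun h => hne13 (by rw [h])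
  have d23 : z2 ≠ z3 := fun h => hne23 (by rw [h])
  exact k33_cap h33 a1 a2 a3 z1 z2 z3 u1 u2 u3 d12 d13 d23
    hz1 o1.1 o1.2.1 hz2 o2.1 o2.2.1 hz3 o3.1 o3.2.1

lemma card_union6_le {α : Type*} [DecidableEq α] (A B C D E F : Finset α) :
    (A ∪ B ∪ C ∪ D ∪ E ∪ F).card ≤
      A.card + B.card + C.card + D.card + E.card + F.card := by
  have h1 := Finset.card_union_le (A ∪ B ∪ C ∪ D ∪ E) F
  have h2 := Finset.card_union_le (A ∪ B ∪ C ∪ D) E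
  have h3 := Finset.card_union_le (A ∪ B ∪ C) D
  have h4 := Finset.card_union_le (A ∪ B) C
  have h5 := Finset.card_union_le A B
  omega

lemma card_union7_le {α : Type*} [DecidableEq α] (A B C D E F H : Finset α) :
    (A ∪ B ∪ C ∪ D ∪ E ∪ F ∪ H).card ≤
      A.card + B.card + C.card + D.card + E.card + F.card + H.card := by
  have h1 := Finset.card_union_le (A ∪ B ∪ C ∪ D ∪ E ∪ F) H
  have h2 := card_union6_le A B C D E F
  omega

lemma card_triple_le {α : Type*} [DecidableEq α] (x y z : α) :
    ({x, y, z} : Finset α).card ≤ 3 := by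
  have h1 := Finset.card_insert_le x ({y, z} : Finset α)
  have h2 := Finset.card_insert_le y ({z} : Finset α)
  have h3 : ({z} : Finset α).card = 1 := Finset.card_singleton z
  omega

/-- The prism-membership predicate. -/
def PP (a1 b1 a2 b2 a3 b3 v : V) : Prop :=
  v = a1 ∨ v = b1 ∨ v = a2 ∨ v = b2 ∨ v = a3 ∨ v = b3

noncomputable def InnF (K : Finset (Sym2 V)) (a1 b1 a2 b2 a3 b3 : V) : Finset (Sym2 V) :=
  @Finset.filter _ (fun g => ∀ v ∈ g, PP a1 b1 a2 b2 a3 b3 v)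
    (fun _ => Classical.propDecidable _) K

noncomputable def OutF (K : Finset (Sym2 V)) (a1 b1 a2 b2 a3 b3 s : V) : Finset (Sym2 V) :=
  @Finset.filter _ (fun g => s ∈ g ∧ ¬ ∀ v ∈ g, PP a1 b1 a2 b2 a3 b3 v)
    (fun _ => Classical.propDecidable _) K

lemma mem_InnF {K : Finset (Sym2 V)} {a1 b1 a2 b2 a3 b3 : V} {g : Sym2 V} :
    g ∈ InnF K a1 b1 a2 b2 a3 b3 ↔ g ∈ K ∧ ∀ v ∈ g, PP a1 b1 a2 b2 a3 b3 v := by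
  unfold InnF; exact @Finset.mem_filter _ _ (fun _ => Classical.propDecidable _) _ _

lemma mem_OutF {K : Finset (Sym2 V)} {a1 b1 a2 b2 a3 b3 s : V} {g : Sym2 V} :
    g ∈ OutF K a1 b1 a2 b2 a3 b3 s ↔
      g ∈ K ∧ (s ∈ g ∧ ¬ ∀ v ∈ g, PP a1 b1 a2 b2 a3 b3 v) := by
  unfold OutF; exact @Finset.mem_filter _ _ (fun _ => Classical.propDecidable _) _ _

set_option maxHeartbeats 2000000 in
lemma inn_cases [DecidableEq V] {G : SimpleGraph V} {p q a1 b1 a2 b2 a3 b3 : V}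
    (hadj : G.Adj p q)
    (hP : p = a1 ∨ p = b1 ∨ p = a2 ∨ p = b2 ∨ p = a3 ∨ p = b3)
    (hQ : q = a1 ∨ q = b1 ∨ q = a2 ∨ q = b2 ∨ q = a3 ∨ q = b3) :
    s(p, q) ∈ (({s(a1, b1), s(a2, b2), s(a3, b3)} : Finset (Sym2 V)) ∪
      {s(a1, a2), s(a1, a3), s(a2, a3)} ∪ {s(b1, b2), s(b1, b3), s(b2, b3)} ∪
      {s(a1, b2), s(a2, b1)} ∪ {s(a1, b3), s(a3, b1)} ∪ {s(a2, b3), s(a3, b2)}) := by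
  simp only [Finset.mem_union, Finset.mem_insert, Finset.mem_singleton, Sym2.eq_iff]
  rcases hP with rfl | rfl | rfl | rfl | rfl | rfl <;>
    rcases hQ with rfl | rfl | rfl | rfl | rfl | rfl <;>
    first
    | exact absurd hadj (G.irrefl)
    | simp

set_option maxHeartbeats 3000000 in
lemma nu3_main [DecidableEq V] {K : Finset (Sym2 V)} (hK : GoodClique G K)
    (h33 : ¬ HasMinor G (completeBipartiteGraph (Fin 3) (Fin 3)))
    (h5 : ¬ HasMinor G (completeGraph (Fin 5)))
    (hp : Prism G a1 a2 a3 b1 b2 b3)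
    (m1 : s(a1, b1) ∈ K) (m2 : s(a2, b2) ∈ K) (m3 : s(a3, b3) ∈ K)
    (hcard : 13 ≤ K.card) : False := by
  obtain ⟨u1, u2, u3, u4, u5, u6, u7, u8, u9, u10, u11, u12, u13, u14, u15⟩ := hp.nes
  have hcov : ∀ g ∈ K, a1 ∈ g ∨ b1 ∈ g ∨ a2 ∈ g ∨ b2 ∈ g ∨ a3 ∈ g ∨ b3 ∈ g := by
    intro g hg
    by_contra hcon
    push_neg at hcon
    obtain ⟨w1, w2, w3, w4, w5, w6⟩ := hcon
    refine no_four hK h33 hg m1 m2 m3 ?_ ?_ ?_ hp.d12 hp.d13 hp.d23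
    · intro v hv hv'
      rw [Sym2.mem_iff] at hv'
      rcases hv' with rfl | rfl
      exacts [w1 hv, w2 hv]
    · intro v hv hv'
      rw [Sym2.mem_iff] at hv'
      rcases hv' with rfl | rfl
      exacts [w3 hv, w4 hv]
    · intro v hv hv'
      rw [Sym2.mem_iff] at hv'
      rcases hv' with rfl | rfl
      exacts [w5 hv, w6 hv]
  have hnp : ∀ z, ¬ PP a1 b1 a2 b2 a3 b3 z →
      z ≠ a1 ∧ z ≠ a2 ∧ z ≠ a3 ∧ z ≠ b1 ∧ z ≠ b2 ∧ z ≠ b3 := by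
    intro z hz
    simp only [PP] at hz
    push_neg at hz
    tauto
  have hext : ∀ s g, PP a1 b1 a2 b2 a3 b3 s → g ∈ OutF K a1 b1 a2 b2 a3 b3 s →
      ∃ z, g = s(s, z) ∧
      (z ≠ a1 ∧ z ≠ a2 ∧ z ≠ a3 ∧ z ≠ b1 ∧ z ≠ b2 ∧ z ≠ b3) ∧ g ∈ K := by
    intro s g hPs hg
    rw [mem_OutF] at hg
    obtain ⟨hgK, hsg, hnall⟩ := hg
    push_neg at hnall
    obtain ⟨z, hzg, hzP⟩ := hnall
    have hzs : s ≠ z := fun h => hzP (h ▸ hPs)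
    exact ⟨z, sym2_eq_of_mems hsg hzg hzs, hnp z hzP, hgK⟩
  have witRaw : ∀ s, PP a1 b1 a2 b2 a3 b3 s → (OutF K a1 b1 a2 b2 a3 b3 s).Nonempty →
      ∃ z, s(s, z) ∈ K ∧
      (z ≠ a1 ∧ z ≠ a2 ∧ z ≠ a3 ∧ z ≠ b1 ∧ z ≠ b2 ∧ z ≠ b3) := by
    rintro s hPs ⟨g, hg⟩
    obtain ⟨z, rfl, nz, hgK⟩ := hext s g hPs hg
    exact ⟨z, hgK, nz⟩
  have Pa1 : PP a1 b1 a2 b2 a3 b3 a1 := Or.inl rfl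
  have Pb1 : PP a1 b1 a2 b2 a3 b3 b1 := Or.inr (Or.inl rfl)
  have Pa2 : PP a1 b1 a2 b2 a3 b3 a2 := Or.inr (Or.inr (Or.inl rfl))
  have Pb2 : PP a1 b1 a2 b2 a3 b3 b2 := Or.inr (Or.inr (Or.inr (Or.inl rfl)))
  have Pa3 : PP a1 b1 a2 b2 a3 b3 a3 := Or.inr (Or.inr (Or.inr (Or.inr (Or.inl rfl))))
  have Pb3 : PP a1 b1 a2 b2 a3 b3 b3 := Or.inr (Or.inr (Or.inr (Or.inr (Or.inr rfl))))
  have hoA1 : (OutF K a1 b1 a2 b2 a3 b3 a1).card ≤ 2 := by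
    refine out_card_le hK h33 h5 hp m2 m3 _ (fun g hg => ?_)
    obtain ⟨z, rfl, nz, hgK⟩ := hext a1 g Pa1 hg
    exact ⟨hgK, z, rfl, nz⟩
  have hoA2 : (OutF K a1 b1 a2 b2 a3 b3 a2).card ≤ 2 := by
    refine out_card_le hK h33 h5 hp.rot.swap23 m1 m3 _ (fun g hg => ?_)
    obtain ⟨z, rfl, nz, hgK⟩ := hext a2 g Pa2 hg
    exact ⟨hgK, z, rfl, ⟨nz.2.1, nz.1, nz.2.2.1, nz.2.2.2.2.1, nz.2.2.2.1, nz.2.2.2.2.2⟩⟩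
  have hoA3 : (OutF K a1 b1 a2 b2 a3 b3 a3).card ≤ 2 := by
    refine out_card_le hK h33 h5 hp.rot.rot m1 m2 _ (fun g hg => ?_)
    obtain ⟨z, rfl, nz, hgK⟩ := hext a3 g Pa3 hg
    exact ⟨hgK, z, rfl, ⟨nz.2.2.1, nz.1, nz.2.1, nz.2.2.2.2.2, nz.2.2.2.1, nz.2.2.2.2.1⟩⟩
  have hoB1 : (OutF K a1 b1 a2 b2 a3 b3 b1).card ≤ 2 := by
    refine out_card_le hK h33 h5 hp.flip (mem_swap m2) (mem_swap m3) _ (fun g hg => ?_)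
    obtain ⟨z, rfl, nz, hgK⟩ := hext b1 g Pb1 hg
    exact ⟨hgK, z, rfl, ⟨nz.2.2.2.1, nz.2.2.2.2.1, nz.2.2.2.2.2, nz.1, nz.2.1, nz.2.2.1⟩⟩
  have hoB2 : (OutF K a1 b1 a2 b2 a3 b3 b2).card ≤ 2 := by
    refine out_card_le hK h33 h5 hp.flip.rot.swap23 (mem_swap m1) (mem_swap m3) _
      (fun g hg => ?_)
    obtain ⟨z, rfl, nz, hgK⟩ := hext b2 g Pb2 hg
    exact ⟨hgK, z, rfl, ⟨nz.2.2.2.2.1, nz.2.2.2.1, nz.2.2.2.2.2, nz.2.1, nz.1, nz.2.2.1⟩⟩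
  have hoB3 : (OutF K a1 b1 a2 b2 a3 b3 b3).card ≤ 2 := by
    refine out_card_le hK h33 h5 hp.flip.rot.rot (mem_swap m1) (mem_swap m2) _
      (fun g hg => ?_)
    obtain ⟨z, rfl, nz, hgK⟩ := hext b3 g Pb3 hg
    exact ⟨hgK, z, rfl, ⟨nz.2.2.2.2.2, nz.2.2.2.1, nz.2.2.2.2.1, nz.2.2.1, nz.1, nz.2.1⟩⟩
  have cAA12 : ¬((OutF K a1 b1 a2 b2 a3 b3 a1).Nonempty ∧
      (OutF K a1 b1 a2 b2 a3 b3 a2).Nonempty) := by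
    rintro ⟨h1, h2⟩
    obtain ⟨z, mz, nz⟩ := witRaw a1 Pa1 h1
    obtain ⟨w, mw, nw⟩ := witRaw a2 Pa2 h2
    exact conflictAA hK h33 h5 hp m1 m2 m3 nz nw mz mw
  have cAA13 : ¬((OutF K a1 b1 a2 b2 a3 b3 a1).Nonempty ∧
      (OutF K a1 b1 a2 b2 a3 b3 a3).Nonempty) := by
    rintro ⟨h1, h2⟩
    obtain ⟨z, mz, nz⟩ := witRaw a1 Pa1 h1
    obtain ⟨w, mw, nw⟩ := witRaw a3 Pa3 h2
    exact conflictAA hK h33 h5 hp.swap23 m1 m3 m2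
      ⟨nz.1, nz.2.2.1, nz.2.1, nz.2.2.2.1, nz.2.2.2.2.2, nz.2.2.2.2.1⟩
      ⟨nw.1, nw.2.2.1, nw.2.1, nw.2.2.2.1, nw.2.2.2.2.2, nw.2.2.2.2.1⟩ mz mw
  have cAA23 : ¬((OutF K a1 b1 a2 b2 a3 b3 a2).Nonempty ∧
      (OutF K a1 b1 a2 b2 a3 b3 a3).Nonempty) := by
    rintro ⟨h1, h2⟩
    obtain ⟨z, mz, nz⟩ := witRaw a2 Pa2 h1
    obtain ⟨w, mw, nw⟩ := witRaw a3 Pa3 h2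
    exact conflictAA hK h33 h5 hp.rot m2 m3 m1
      ⟨nz.2.1, nz.2.2.1, nz.1, nz.2.2.2.2.1, nz.2.2.2.2.2, nz.2.2.2.1⟩
      ⟨nw.2.1, nw.2.2.1, nw.1, nw.2.2.2.2.1, nw.2.2.2.2.2, nw.2.2.2.1⟩ mz mw
  have cBB12 : ¬((OutF K a1 b1 a2 b2 a3 b3 b1).Nonempty ∧
      (OutF K a1 b1 a2 b2 a3 b3 b2).Nonempty) := by
    rintro ⟨h1, h2⟩
    obtain ⟨z, mz, nz⟩ := witRaw b1 Pb1 h1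
    obtain ⟨w, mw, nw⟩ := witRaw b2 Pb2 h2
    exact conflictAA hK h33 h5 hp.flip (mem_swap m1) (mem_swap m2) (mem_swap m3)
      ⟨nz.2.2.2.1, nz.2.2.2.2.1, nz.2.2.2.2.2, nz.1, nz.2.1, nz.2.2.1⟩
      ⟨nw.2.2.2.1, nw.2.2.2.2.1, nw.2.2.2.2.2, nw.1, nw.2.1, nw.2.2.1⟩ mz mw
  have cBB13 : ¬((OutF K a1 b1 a2 b2 a3 b3 b1).Nonempty ∧
      (OutF K a1 b1 a2 b2 a3 b3 b3).Nonempty) := by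
    rintro ⟨h1, h2⟩
    obtain ⟨z, mz, nz⟩ := witRaw b1 Pb1 h1
    obtain ⟨w, mw, nw⟩ := witRaw b3 Pb3 h2
    exact conflictAA hK h33 h5 hp.flip.swap23 (mem_swap m1) (mem_swap m3) (mem_swap m2)
      ⟨nz.2.2.2.1, nz.2.2.2.2.2, nz.2.2.2.2.1, nz.1, nz.2.2.1, nz.2.1⟩
      ⟨nw.2.2.2.1, nw.2.2.2.2.2, nw.2.2.2.2.1, nw.1, nw.2.2.1, nw.2.1⟩ mz mw
  have cBB23 : ¬((OutF K a1 b1 a2 b2 a3 b3 b2).Nonempty ∧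
      (OutF K a1 b1 a2 b2 a3 b3 b3).Nonempty) := by
    rintro ⟨h1, h2⟩
    obtain ⟨z, mz, nz⟩ := witRaw b2 Pb2 h1
    obtain ⟨w, mw, nw⟩ := witRaw b3 Pb3 h2
    exact conflictAA hK h33 h5 hp.flip.rot (mem_swap m2) (mem_swap m3) (mem_swap m1)
      ⟨nz.2.2.2.2.1, nz.2.2.2.2.2, nz.2.2.2.1, nz.2.1, nz.2.2.1, nz.1⟩
      ⟨nw.2.2.2.2.1, nw.2.2.2.2.2, nw.2.2.2.1, nw.2.1, nw.2.2.1, nw.1⟩ mz mw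
  have cR1 : ¬((OutF K a1 b1 a2 b2 a3 b3 a1).Nonempty ∧
      (OutF K a1 b1 a2 b2 a3 b3 b1).Nonempty) := by
    rintro ⟨h1, h2⟩
    obtain ⟨z, mz, nz⟩ := witRaw a1 Pa1 h1
    obtain ⟨w, mw, nw⟩ := witRaw b1 Pb1 h2
    exact conflictRung hK h33 h5 hp m2 m3 nz nw mz mw
  have cR2 : ¬((OutF K a1 b1 a2 b2 a3 b3 a2).Nonempty ∧
      (OutF K a1 b1 a2 b2 a3 b3 b2).Nonempty) := by
    rintro ⟨h1, h2⟩
    obtain ⟨z, mz, nz⟩ := witRaw a2 Pa2 h1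
    obtain ⟨w, mw, nw⟩ := witRaw b2 Pb2 h2
    exact conflictRung hK h33 h5 hp.rot.swap23 m1 m3
      ⟨nz.2.1, nz.1, nz.2.2.1, nz.2.2.2.2.1, nz.2.2.2.1, nz.2.2.2.2.2⟩
      ⟨nw.2.1, nw.1, nw.2.2.1, nw.2.2.2.2.1, nw.2.2.2.1, nw.2.2.2.2.2⟩ mz mw
  have cR3 : ¬((OutF K a1 b1 a2 b2 a3 b3 a3).Nonempty ∧
      (OutF K a1 b1 a2 b2 a3 b3 b3).Nonempty) := by
    rintro ⟨h1, h2⟩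
    obtain ⟨z, mz, nz⟩ := witRaw a3 Pa3 h1
    obtain ⟨w, mw, nw⟩ := witRaw b3 Pb3 h2
    exact conflictRung hK h33 h5 hp.rot.rot m1 m2
      ⟨nz.2.2.1, nz.1, nz.2.1, nz.2.2.2.2.2, nz.2.2.2.1, nz.2.2.2.2.1⟩
      ⟨nw.2.2.1, nw.1, nw.2.1, nw.2.2.2.2.2, nw.2.2.2.1, nw.2.2.2.2.1⟩ mz mw
  have hInnSub : InnF K a1 b1 a2 b2 a3 b3 ⊆
      (({s(a1, b1), s(a2, b2), s(a3, b3)} : Finset (Sym2 V)) ∪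
      {s(a1, a2), s(a1, a3), s(a2, a3)} ∪ {s(b1, b2), s(b1, b3), s(b2, b3)} ∪
      {s(a1, b2), s(a2, b1)} ∪ {s(a1, b3), s(a3, b1)} ∪ {s(a2, b3), s(a3, b2)}) := by
    intro g hg
    rw [mem_InnF] at hg
    obtain ⟨hgK, hall⟩ := hg
    obtain ⟨p, q, rfl⟩ := sym2_rep g
    have hadj : G.Adj p q := G.mem_edgeSet.mp (hK.edge _ hgK)
    have hP := hall p (by rw [Sym2.mem_iff]; left; rfl)
    have hQ := hall q (by rw [Sym2.mem_iff]; right; rfl)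
    exact inn_cases hadj hP hQ
  have hIsplit : InnF K a1 b1 a2 b2 a3 b3 ⊆
      (InnF K a1 b1 a2 b2 a3 b3 ∩ ({s(a1, b1), s(a2, b2), s(a3, b3)} : Finset (Sym2 V))) ∪
      (InnF K a1 b1 a2 b2 a3 b3 ∩ {s(a1, a2), s(a1, a3), s(a2, a3)}) ∪
      (InnF K a1 b1 a2 b2 a3 b3 ∩ {s(b1, b2), s(b1, b3), s(b2, b3)}) ∪
      (InnF K a1 b1 a2 b2 a3 b3 ∩ {s(a1, b2), s(a2, b1)}) ∪
      (InnF K a1 b1 a2 b2 a3 b3 ∩ {s(a1, b3), s(a3, b1)}) ∪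
      (InnF K a1 b1 a2 b2 a3 b3 ∩ {s(a2, b3), s(a3, b2)}) := by
    intro g hg
    have h2 := hInnSub hg
    simp only [Finset.mem_union, Finset.mem_inter] at h2 ⊢
    rcases h2 with ((((h | h) | h) | h) | h) | h
    · exact Or.inl (Or.inl (Or.inl (Or.inl (Or.inl ⟨hg, h⟩))))
    · exact Or.inl (Or.inl (Or.inl (Or.inl (Or.inr ⟨hg, h⟩))))
    · exact Or.inl (Or.inl (Or.inl (Or.inr ⟨hg, h⟩)))
    · exact Or.inl (Or.inl (Or.inr ⟨hg, h⟩))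
    · exact Or.inl (Or.inr ⟨hg, h⟩)
    · exact Or.inr ⟨hg, h⟩
  have hInnCard : (InnF K a1 b1 a2 b2 a3 b3).card ≤
      (InnF K a1 b1 a2 b2 a3 b3 ∩ ({s(a1, b1), s(a2, b2), s(a3, b3)} : Finset (Sym2 V))).card +
      (InnF K a1 b1 a2 b2 a3 b3 ∩ {s(a1, a2), s(a1, a3), s(a2, a3)}).card +
      (InnF K a1 b1 a2 b2 a3 b3 ∩ {s(b1, b2), s(b1, b3), s(b2, b3)}).card +
      (InnF K a1 b1 a2 b2 a3 b3 ∩ {s(a1, b2), s(a2, b1)}).card +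
      (InnF K a1 b1 a2 b2 a3 b3 ∩ {s(a1, b3), s(a3, b1)}).card +
      (InnF K a1 b1 a2 b2 a3 b3 ∩ {s(a2, b3), s(a3, b2)}).card :=
    (Finset.card_le_card hIsplit).trans (card_union6_le _ _ _ _ _ _)
  have hRc : (InnF K a1 b1 a2 b2 a3 b3 ∩
      ({s(a1, b1), s(a2, b2), s(a3, b3)} : Finset (Sym2 V))).card ≤ 3 :=
    (Finset.card_le_card Finset.inter_subset_right).trans (card_triple_le _ _ _)
  have hTAc : (InnF K a1 b1 a2 b2 a3 b3 ∩
      ({s(a1, a2), s(a1, a3), s(a2, a3)} : Finset (Sym2 V))).card ≤ 3 :=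
    (Finset.card_le_card Finset.inter_subset_right).trans (card_triple_le _ _ _)
  have hTBc : (InnF K a1 b1 a2 b2 a3 b3 ∩
      ({s(b1, b2), s(b1, b3), s(b2, b3)} : Finset (Sym2 V))).card ≤ 3 :=
    (Finset.card_le_card Finset.inter_subset_right).trans (card_triple_le _ _ _)
  have innK : ∀ g ∈ InnF K a1 b1 a2 b2 a3 b3, g ∈ K := fun g hg => (mem_InnF.mp hg).1
  have hDc : ∀ (x y : Sym2 V), ((x ∈ K) → (y ∈ K) → False) →
      (InnF K a1 b1 a2 b2 a3 b3 ∩ ({x, y} : Finset (Sym2 V))).card ≤ 1 := by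
    intro x y hban
    rw [Finset.card_le_one]
    intro u hu w hw
    rw [Finset.mem_inter] at hu hw
    obtain ⟨huI, huD⟩ := hu
    obtain ⟨hwI, hwD⟩ := hw
    simp only [Finset.mem_insert, Finset.mem_singleton] at huD hwD
    rcases huD with rfl | rfl <;> rcases hwD with rfl | rfl
    · rfl
    · exact absurd (hban (innK _ huI) (innK _ hwI)) id
    · exact absurd (hban (innK _ hwI) (innK _ huI)) id
    · rfl
  have hD1c : (InnF K a1 b1 a2 b2 a3 b3 ∩
      ({s(a1, b2), s(a2, b1)} : Finset (Sym2 V))).card ≤ 1 := by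
    refine hDc _ _ (fun hx hy => ?_)
    exact ban_chord2 h5 hp (G.mem_edgeSet.mp (hK.edge _ hx)) (G.mem_edgeSet.mp (hK.edge _ hy))
  have hD2c : (InnF K a1 b1 a2 b2 a3 b3 ∩
      ({s(a1, b3), s(a3, b1)} : Finset (Sym2 V))).card ≤ 1 := by
    refine hDc _ _ (fun hx hy => ?_)
    exact ban_chord2 h5 hp.swap23 (G.mem_edgeSet.mp (hK.edge _ hx))
      (G.mem_edgeSet.mp (hK.edge _ hy))
  have hD3c : (InnF K a1 b1 a2 b2 a3 b3 ∩
      ({s(a2, b3), s(a3, b2)} : Finset (Sym2 V))).card ≤ 1 := by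
    refine hDc _ _ (fun hx hy => ?_)
    exact ban_chord2 h5 hp.rot (G.mem_edgeSet.mp (hK.edge _ hx))
      (G.mem_edgeSet.mp (hK.edge _ hy))
  have killsTB : ((OutF K a1 b1 a2 b2 a3 b3 a1).Nonempty ∨
      (OutF K a1 b1 a2 b2 a3 b3 a2).Nonempty ∨ (OutF K a1 b1 a2 b2 a3 b3 a3).Nonempty) →
      (InnF K a1 b1 a2 b2 a3 b3 ∩ ({s(b1, b2), s(b1, b3), s(b2, b3)} : Finset (Sym2 V))).card
        = 0 := by
    intro h
    rw [Finset.card_eq_zero, Finset.eq_empty_iff_forall_notMem]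
    intro x hx
    rw [Finset.mem_inter] at hx
    obtain ⟨hxI, hxT⟩ := hx
    have hxK := innK _ hxI
    simp only [Finset.mem_insert, Finset.mem_singleton] at hxT
    rcases h with h | h | h
    · obtain ⟨z, mz, nz⟩ := witRaw a1 Pa1 h
      obtain ⟨k1, k2, k3⟩ := killB hK h33 h5 hp m2 m3 nz mz
      rcases hxT with rfl | rfl | rfl
      exacts [k1 hxK, k2 hxK, k3 hxK]
    · obtain ⟨z, mz, nz⟩ := witRaw a2 Pa2 h
      obtain ⟨k1, k2, k3⟩ := killB hK h33 h5 hp.rot.swap23 m1 m3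
        ⟨nz.2.1, nz.1, nz.2.2.1, nz.2.2.2.2.1, nz.2.2.2.1, nz.2.2.2.2.2⟩ mz
      rcases hxT with rfl | rfl | rfl
      exacts [k1 (mem_swap hxK), k3 hxK, k2 hxK]
    · obtain ⟨z, mz, nz⟩ := witRaw a3 Pa3 h
      obtain ⟨k1, k2, k3⟩ := killB hK h33 h5 hp.rot.rot m1 m2
        ⟨nz.2.2.1, nz.1, nz.2.1, nz.2.2.2.2.2, nz.2.2.2.1, nz.2.2.2.2.1⟩ mz
      rcases hxT with rfl | rfl | rfl
      exacts [k3 hxK, k1 (mem_swap hxK), k2 (mem_swap hxK)]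
  have killsTA : ((OutF K a1 b1 a2 b2 a3 b3 b1).Nonempty ∨
      (OutF K a1 b1 a2 b2 a3 b3 b2).Nonempty ∨ (OutF K a1 b1 a2 b2 a3 b3 b3).Nonempty) →
      (InnF K a1 b1 a2 b2 a3 b3 ∩ ({s(a1, a2), s(a1, a3), s(a2, a3)} : Finset (Sym2 V))).card
        = 0 := by
    intro h
    rw [Finset.card_eq_zero, Finset.eq_empty_iff_forall_notMem]
    intro x hx
    rw [Finset.mem_inter] at hx
    obtain ⟨hxI, hxT⟩ := hx
    have hxK := innK _ hxI
    simp only [Finset.mem_insert, Finset.mem_singleton] at hxT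
    rcases h with h | h | h
    · obtain ⟨z, mz, nz⟩ := witRaw b1 Pb1 h
      obtain ⟨k1, k2, k3⟩ := killB hK h33 h5 hp.flip (mem_swap m2) (mem_swap m3)
        ⟨nz.2.2.2.1, nz.2.2.2.2.1, nz.2.2.2.2.2, nz.1, nz.2.1, nz.2.2.1⟩ mz
      rcases hxT with rfl | rfl | rfl
      exacts [k1 hxK, k2 hxK, k3 hxK]
    · obtain ⟨z, mz, nz⟩ := witRaw b2 Pb2 h
      obtain ⟨k1, k2, k3⟩ := killB hK h33 h5 hp.flip.rot.swap23 (mem_swap m1) (mem_swap m3)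
        ⟨nz.2.2.2.2.1, nz.2.2.2.1, nz.2.2.2.2.2, nz.2.1, nz.1, nz.2.2.1⟩ mz
      rcases hxT with rfl | rfl | rfl
      exacts [k1 (mem_swap hxK), k3 hxK, k2 hxK]
    · obtain ⟨z, mz, nz⟩ := witRaw b3 Pb3 h
      obtain ⟨k1, k2, k3⟩ := killB hK h33 h5 hp.flip.rot.rot (mem_swap m1) (mem_swap m2)
        ⟨nz.2.2.2.2.2, nz.2.2.2.1, nz.2.2.2.2.1, nz.2.2.1, nz.1, nz.2.1⟩ mz
      rcases hxT with rfl | rfl | rfl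
      exacts [k3 hxK, k1 (mem_swap hxK), k2 (mem_swap hxK)]
  have hKsub : K ⊆ InnF K a1 b1 a2 b2 a3 b3 ∪ OutF K a1 b1 a2 b2 a3 b3 a1 ∪
      OutF K a1 b1 a2 b2 a3 b3 b1 ∪ OutF K a1 b1 a2 b2 a3 b3 a2 ∪
      OutF K a1 b1 a2 b2 a3 b3 b2 ∪ OutF K a1 b1 a2 b2 a3 b3 a3 ∪
      OutF K a1 b1 a2 b2 a3 b3 b3 := by
    intro g hg
    simp only [Finset.mem_union]
    by_cases hall : ∀ v ∈ g, PP a1 b1 a2 b2 a3 b3 v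
    · exact Or.inl (Or.inl (Or.inl (Or.inl (Or.inl (Or.inl (mem_InnF.mpr ⟨hg, hall⟩))))))
    · have hOm : ∀ s, s ∈ g → g ∈ OutF K a1 b1 a2 b2 a3 b3 s := by
        intro s hs
        exact mem_OutF.mpr ⟨hg, hs, hall⟩
      rcases hcov g hg with h | h | h | h | h | h
      · exact Or.inl (Or.inl (Or.inl (Or.inl (Or.inl (Or.inr (hOm _ h))))))
      · exact Or.inl (Or.inl (Or.inl (Or.inl (Or.inr (hOm _ h)))))
      · exact Or.inl (Or.inl (Or.inl (Or.inr (hOm _ h))))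
      · exact Or.inl (Or.inl (Or.inr (hOm _ h)))
      · exact Or.inl (Or.inr (hOm _ h))
      · exact Or.inr (hOm _ h)
  have hcount : K.card ≤ (InnF K a1 b1 a2 b2 a3 b3).card +
      (OutF K a1 b1 a2 b2 a3 b3 a1).card + (OutF K a1 b1 a2 b2 a3 b3 b1).card +
      (OutF K a1 b1 a2 b2 a3 b3 a2).card + (OutF K a1 b1 a2 b2 a3 b3 b2).card +
      (OutF K a1 b1 a2 b2 a3 b3 a3).card + (OutF K a1 b1 a2 b2 a3 b3 b3).card :=
    (Finset.card_le_card hKsub).trans (card_union7_le _ _ _ _ _ _ _)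
  have hzc : ∀ F : Finset (Sym2 V), ¬ F.Nonempty → F.card = 0 := by
    intro F h
    rw [Finset.not_nonempty_iff_eq_empty] at h
    rw [h, Finset.card_empty]
  by_cases hA : (OutF K a1 b1 a2 b2 a3 b3 a1).Nonempty ∨
      (OutF K a1 b1 a2 b2 a3 b3 a2).Nonempty ∨ (OutF K a1 b1 a2 b2 a3 b3 a3).Nonempty
  · have tb := killsTB hA
    have haA : (OutF K a1 b1 a2 b2 a3 b3 a1).card + (OutF K a1 b1 a2 b2 a3 b3 a2).card +
        (OutF K a1 b1 a2 b2 a3 b3 a3).card ≤ 2 := by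
      by_cases h1 : (OutF K a1 b1 a2 b2 a3 b3 a1).Nonempty
      · have h2 := hzc _ (fun h => cAA12 ⟨h1, h⟩)
        have h3 := hzc _ (fun h => cAA13 ⟨h1, h⟩)
        omega
      · by_cases h2 : (OutF K a1 b1 a2 b2 a3 b3 a2).Nonempty
        · have h1' := hzc _ h1
          have h3 := hzc _ (fun h => cAA23 ⟨h2, h⟩)
          omega
        · have h1' := hzc _ h1
          have h2' := hzc _ h2
          omega
    by_cases hB : (OutF K a1 b1 a2 b2 a3 b3 b1).Nonempty ∨
        (OutF K a1 b1 a2 b2 a3 b3 b2).Nonempty ∨ (OutF K a1 b1 a2 b2 a3 b3 b3).Nonempty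
    · have ta := killsTA hB
      have hbB : (OutF K a1 b1 a2 b2 a3 b3 b1).card + (OutF K a1 b1 a2 b2 a3 b3 b2).card +
          (OutF K a1 b1 a2 b2 a3 b3 b3).card ≤ 2 := by
        by_cases h1 : (OutF K a1 b1 a2 b2 a3 b3 b1).Nonempty
        · have h2 := hzc _ (fun h => cBB12 ⟨h1, h⟩)
          have h3 := hzc _ (fun h => cBB13 ⟨h1, h⟩)
          omega
        · by_cases h2 : (OutF K a1 b1 a2 b2 a3 b3 b2).Nonempty
          · have h1' := hzc _ h1
            have h3 := hzc _ (fun h => cBB23 ⟨h2, h⟩)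
            omega
          · have h1' := hzc _ h1
            have h2' := hzc _ h2
            omega
      omega
    · push_neg at hB
      have hb1 := hzc _ (Finset.not_nonempty_iff_eq_empty.mpr hB.1)
      have hb2 := hzc _ (Finset.not_nonempty_iff_eq_empty.mpr hB.2.1)
      have hb3 := hzc _ (Finset.not_nonempty_iff_eq_empty.mpr hB.2.2)
      omega
  · push_neg at hA
    have ha1 := hzc _ (Finset.not_nonempty_iff_eq_empty.mpr hA.1)
    have ha2 := hzc _ (Finset.not_nonempty_iff_eq_empty.mpr hA.2.1)
    have ha3 := hzc _ (Finset.not_nonempty_iff_eq_empty.mpr hA.2.2)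
    by_cases hB : (OutF K a1 b1 a2 b2 a3 b3 b1).Nonempty ∨
        (OutF K a1 b1 a2 b2 a3 b3 b2).Nonempty ∨ (OutF K a1 b1 a2 b2 a3 b3 b3).Nonempty
    · have ta := killsTA hB
      have hbB : (OutF K a1 b1 a2 b2 a3 b3 b1).card + (OutF K a1 b1 a2 b2 a3 b3 b2).card +
          (OutF K a1 b1 a2 b2 a3 b3 b3).card ≤ 2 := by
        by_cases h1 : (OutF K a1 b1 a2 b2 a3 b3 b1).Nonempty
        · have h2 := hzc _ (fun h => cBB12 ⟨h1, h⟩)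
          have h3 := hzc _ (fun h => cBB13 ⟨h1, h⟩)
          omega
        · by_cases h2 : (OutF K a1 b1 a2 b2 a3 b3 b2).Nonempty
          · have h1' := hzc _ h1
            have h3 := hzc _ (fun h => cBB23 ⟨h2, h⟩)
            omega
          · have h1' := hzc _ h1
            have h2' := hzc _ h2
            omega
      omega
    · push_neg at hB
      have hb1 := hzc _ (Finset.not_nonempty_iff_eq_empty.mpr hB.1)
      have hb2 := hzc _ (Finset.not_nonempty_iff_eq_empty.mpr hB.2.1)
      have hb3 := hzc _ (Finset.not_nonempty_iff_eq_empty.mpr hB.2.2)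
      omega

/-- ν=3: a clique with three pairwise disjoint edges has at most 12 edges. -/
lemma nu3 [DecidableEq V] {K : Finset (Sym2 V)} (hK : GoodClique G K)
    (h33 : ¬ HasMinor G (completeBipartiteGraph (Fin 3) (Fin 3)))
    (h5 : ¬ HasMinor G (completeGraph (Fin 5)))
    {g1 g2 g3 : Sym2 V} (m1 : g1 ∈ K) (m2 : g2 ∈ K) (m3 : g3 ∈ K)
    (d12 : EdgeDisjoint g1 g2) (d13 : EdgeDisjoint g1 g3) (d23 : EdgeDisjoint g2 g3)
    (hcard : 13 ≤ K.card) : False := by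
  obtain ⟨x1, x2, x3, y1, y2, y3, hp, mm1, mm2, mm3⟩ :=
    prism_of hK h33 m1 m2 m3 d12 d13 d23
  exact nu3_main hK h33 h5 hp mm1 mm2 mm3 hcard

def QP (u v x y t : V) : Prop := t = u ∨ t = v ∨ t = x ∨ t = y

noncomputable def InnQ (K : Finset (Sym2 V)) (u v x y : V) : Finset (Sym2 V) :=
  @Finset.filter _ (fun g => ∀ t ∈ g, QP u v x y t)
    (fun _ => Classical.propDecidable _) K

noncomputable def OutQ (K : Finset (Sym2 V)) (u v x y s : V) : Finset (Sym2 V) :=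
  @Finset.filter _ (fun g => s ∈ g ∧ ¬ ∀ t ∈ g, QP u v x y t)
    (fun _ => Classical.propDecidable _) K

lemma mem_InnQ {K : Finset (Sym2 V)} {u v x y : V} {g : Sym2 V} :
    g ∈ InnQ K u v x y ↔ g ∈ K ∧ ∀ t ∈ g, QP u v x y t := by
  unfold InnQ; exact @Finset.mem_filter _ _ (fun _ => Classical.propDecidable _) _ _

lemma mem_OutQ {K : Finset (Sym2 V)} {u v x y s : V} {g : Sym2 V} :
    g ∈ OutQ K u v x y s ↔ g ∈ K ∧ (s ∈ g ∧ ¬ ∀ t ∈ g, QP u v x y t) := by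
  unfold OutQ; exact @Finset.mem_filter _ _ (fun _ => Classical.propDecidable _) _ _

set_option maxHeartbeats 1000000 in
lemma innq_cases [DecidableEq V] {G : SimpleGraph V} {p q u v x y : V}
    (hadj : G.Adj p q)
    (hP : p = u ∨ p = v ∨ p = x ∨ p = y)
    (hQ : q = u ∨ q = v ∨ q = x ∨ q = y) :
    s(p, q) ∈ ({s(u, v), s(u, x), s(u, y), s(v, x), s(v, y), s(x, y)} : Finset (Sym2 V)) := by
  simp only [Finset.mem_insert, Finset.mem_singleton, Sym2.eq_iff]
  rcases hP with rfl | rfl | rfl | rfl <;> rcases hQ with rfl | rfl | rfl | rfl <;>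
    first
    | exact absurd hadj (G.irrefl)
    | simp

lemma card_union5_le {α : Type*} [DecidableEq α] (A B C D E : Finset α) :
    (A ∪ B ∪ C ∪ D ∪ E).card ≤ A.card + B.card + C.card + D.card + E.card := by
  have h1 := Finset.card_union_le (A ∪ B ∪ C ∪ D) E
  have h2 := Finset.card_union_le (A ∪ B ∪ C) D
  have h3 := Finset.card_union_le (A ∪ B) C
  have h4 := Finset.card_union_le A B
  omega

lemma card_le_six {α : Type*} [DecidableEq α] (a b c d e f : α) :
    ({a, b, c, d, e, f} : Finset α).card ≤ 6 := by
  have h1 := Finset.card_insert_le a ({b, c, d, e, f} : Finset α)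
  have h2 := Finset.card_insert_le b ({c, d, e, f} : Finset α)
  have h3 := Finset.card_insert_le c ({d, e, f} : Finset α)
  have h4 := Finset.card_insert_le d ({e, f} : Finset α)
  have h5 := Finset.card_insert_le e ({f} : Finset α)
  have h6 : ({f} : Finset α).card = 1 := Finset.card_singleton f
  omega

set_option maxHeartbeats 2000000 in
lemma nu2 [Fintype V] [DecidableEq V] {G : SimpleGraph V} [DecidableRel G.Adj]
    {K : Finset (Sym2 V)} (hK : GoodClique G K)
    {u v x y : V} (he : s(u, v) ∈ K) (hf : s(x, y) ∈ K)
    (hef : EdgeDisjoint s(u, v) s(x, y))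
    (hno3 : ∀ g1 g2 g3 : Sym2 V, g1 ∈ K → g2 ∈ K → g3 ∈ K → EdgeDisjoint g1 g2 →
      EdgeDisjoint g1 g3 → EdgeDisjoint g2 g3 → False)
    (hcard : 2 * G.maxDegree + 1 ≤ K.card) (hD : 6 ≤ G.maxDegree) : False := by
  classical
  have huv : G.Adj u v := G.mem_edgeSet.mp (hK.edge _ he)
  have hxy : G.Adj x y := G.mem_edgeSet.mp (hK.edge _ hf)
  obtain ⟨n1, n2, n3, n4⟩ := edgeDisjoint_iff.mp hef
  have hQcov : ∀ g ∈ K, u ∈ g ∨ v ∈ g ∨ x ∈ g ∨ y ∈ g := by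
    intro g hg
    by_contra hcon
    push_neg at hcon
    obtain ⟨w1, w2, w3, w4⟩ := hcon
    refine hno3 g _ _ hg he hf ?_ ?_ hef
    · intro t ht ht'
      rw [Sym2.mem_iff] at ht'
      rcases ht' with rfl | rfl
      exacts [w1 ht, w2 ht]
    · intro t ht ht'
      rw [Sym2.mem_iff] at ht'
      rcases ht' with rfl | rfl
      exacts [w3 ht, w4 ht]
  have hEp : ∀ p : V, (K.filter (fun g => p ∈ g)).card ≤ G.maxDegree := by
    intro p
    have hsub : K.filter (fun g => p ∈ g) ⊆ G.incidenceFinset p := by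
      intro g hg
      rw [Finset.mem_filter] at hg
      rw [mem_incidenceFinset]
      exact ⟨hK.edge _ hg.1, hg.2⟩
    calc (K.filter (fun g => p ∈ g)).card ≤ (G.incidenceFinset p).card :=
          Finset.card_le_card hsub
      _ = G.degree p := G.card_incidenceFinset_eq_degree p
      _ ≤ G.maxDegree := G.degree_le_maxDegree p
  have hmiss : ∀ p : V, G.maxDegree + 1 ≤ (K.filter (fun g => ¬ p ∈ g)).card := by
    intro p
    have hsplit := Finset.card_filter_add_card_filter_not
      (s := K) (p := fun g => p ∈ g)
    have := hEp p
    omega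
  have hpair : ∀ p : V, ∃ α β : Sym2 V, α ∈ K ∧ β ∈ K ∧ p ∉ α ∧ p ∉ β ∧
      EdgeDisjoint α β := by
    intro p
    by_cases hex : ∃ α ∈ K.filter (fun g => ¬ p ∈ g), ∃ β ∈ K.filter (fun g => ¬ p ∈ g),
        EdgeDisjoint α β
    · obtain ⟨α, hα, β, hβ, hd⟩ := hex
      rw [Finset.mem_filter] at hα hβ
      exact ⟨α, β, hα.1, hβ.1, hα.2, hβ.2, hd⟩
    · push_neg at hex
      have hint : ∀ g ∈ K.filter (fun g => ¬ p ∈ g), ∀ h ∈ K.filter (fun g => ¬ p ∈ g),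
          ∃ t, t ∈ g ∧ t ∈ h := by
        intro g hg h hh
        by_contra hcon
        push_neg at hcon
        exact hex g hg h hh (fun t ht ht' => hcon t ht ht')
      have hnd : ∀ g ∈ K.filter (fun g => ¬ p ∈ g), ¬ g.IsDiag := by
        intro g hg hdiag
        rw [Finset.mem_filter] at hg
        obtain ⟨c, d, rfl⟩ := sym2_rep g
        rw [Sym2.mk_isDiag_iff] at hdiag
        exact (G.mem_edgeSet.mp (hK.edge _ hg.1)).ne hdiag
      obtain ⟨q, hq⟩ := star_of_intersecting _ hnd hint (by have := hmiss p; omega)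
      have hb : K.card ≤ 2 * G.maxDegree := by
        have hsub : K ⊆ K.filter (fun g => p ∈ g) ∪ K.filter (fun g => q ∈ g) := by
          intro g hg
          rw [Finset.mem_union, Finset.mem_filter, Finset.mem_filter]
          by_cases hp' : p ∈ g
          · exact Or.inl ⟨hg, hp'⟩
          · exact Or.inr ⟨hg, hq g (Finset.mem_filter.mpr ⟨hg, hp'⟩)⟩
        have h1 := hEp p
        have h2 := hEp q
        have h3 := (Finset.card_le_card hsub).trans (Finset.card_union_le _ _)
        omega
      omega
  have huniq : ∀ γ : Sym2 V, γ ∈ K → ∀ z z' : V, z ∈ γ → z' ∈ γ →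
      (z ≠ u ∧ z ≠ v ∧ z ≠ x ∧ z ≠ y) → (z' ≠ u ∧ z' ≠ v ∧ z' ≠ x ∧ z' ≠ y) →
      z = z' := by
    intro γ hγ z z' hz hz' hnz hnz'
    obtain ⟨c, d, rfl⟩ := sym2_rep γ
    rw [Sym2.mem_iff] at hz hz'
    rcases hQcov _ hγ with h | h | h | h <;> rw [Sym2.mem_iff] at h <;>
      rcases h with rfl | rfl <;> rcases hz with rfl | rfl <;> rcases hz' with rfl | rfl <;>
      simp_all
  -- outer edges at a Q-vertex: at most 2
  have hOut2 : ∀ s : V, QP u v x y s → (OutQ K u v x y s).card ≤ 2 := by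
    intro s hPs
    by_contra hgt
    push_neg at hgt
    obtain ⟨g1, hg1, g2, hg2, g3, hg3, hne12, hne13, hne23⟩ := Finset.two_lt_card.mp hgt
    have hget : ∀ g, g ∈ OutQ K u v x y s → ∃ z : V, g = s(s, z) ∧ g ∈ K ∧
        (z ≠ u ∧ z ≠ v ∧ z ≠ x ∧ z ≠ y) := by
      intro g hg
      rw [mem_OutQ] at hg
      obtain ⟨hgK, hsg, hnall⟩ := hg
      push_neg at hnall
      obtain ⟨z, hzg, hzP⟩ := hnall
      have hzs : s ≠ z := fun h => hzP (h ▸ hPs)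
      have hz4 : z ≠ u ∧ z ≠ v ∧ z ≠ x ∧ z ≠ y := by
        simp only [QP] at hzP
        push_neg at hzP
        exact hzP
      exact ⟨z, sym2_eq_of_mems hsg hzg hzs, hgK, hz4⟩
    obtain ⟨z1, rfl, hK1, hz1⟩ := hget _ hg1
    obtain ⟨z2, rfl, hK2, hz2⟩ := hget _ hg2
    obtain ⟨z3, rfl, hK3, hz3⟩ := hget _ hg3
    have d12 : z1 ≠ z2 := fun h => hne12 (by rw [h])
    have d13 : z1 ≠ z3 := fun h => hne13 (by rw [h])
    have d23 : z2 ≠ z3 := fun h => hne23 (by rw [h])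
    obtain ⟨α, β, hαK, hβK, hpα, hpβ, hαβ⟩ := hpair s
    have hmem : ∀ z : V, (z ≠ u ∧ z ≠ v ∧ z ≠ x ∧ z ≠ y) → s(s, z) ∈ K →
        z ∈ α ∨ z ∈ β := by
      intro z hz4 hzK
      by_cases hα : EdgeDisjoint s(s, z) α
      · by_cases hβ : EdgeDisjoint s(s, z) β
        · exact absurd (hno3 _ _ _ hzK hαK hβK hα hβ hαβ) id
        · have : ∃ t, t ∈ s(s, z) ∧ t ∈ β := by
            by_contra hcon
            push_neg at hcon
            exact hβ (fun t ht ht' => hcon t ht ht')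
          obtain ⟨t, ht, ht'⟩ := this
          rw [Sym2.mem_iff] at ht
          rcases ht with rfl | rfl
          · exact absurd ht' hpβ
          · exact Or.inr ht'
      · have : ∃ t, t ∈ s(s, z) ∧ t ∈ α := by
          by_contra hcon
          push_neg at hcon
          exact hα (fun t ht ht' => hcon t ht ht')
        obtain ⟨t, ht, ht'⟩ := this
        rw [Sym2.mem_iff] at ht
        rcases ht with rfl | rfl
        · exact absurd ht' hpα
        · exact Or.inl ht'
    have c1 := hmem z1 hz1 hK1
    have c2 := hmem z2 hz2 hK2
    have c3 := hmem z3 hz3 hK3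
    rcases c1 with h1 | h1 <;> rcases c2 with h2 | h2 <;> rcases c3 with h3 | h3
    · exact d12 (huniq α hαK z1 z2 h1 h2 hz1 hz2)
    · exact d12 (huniq α hαK z1 z2 h1 h2 hz1 hz2)
    · exact d13 (huniq α hαK z1 z3 h1 h3 hz1 hz3)
    · exact d23 (huniq β hβK z2 z3 h2 h3 hz2 hz3)
    · exact d23 (huniq α hαK z2 z3 h2 h3 hz2 hz3)
    · exact d13 (huniq β hβK z1 z3 h1 h3 hz1 hz3)
    · exact d12 (huniq β hβK z1 z2 h1 h2 hz1 hz2)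
    · exact d12 (huniq β hβK z1 z2 h1 h2 hz1 hz2)
  -- inner bound
  have hInn6 : (InnQ K u v x y).card ≤ 6 := by
    have hsub : InnQ K u v x y ⊆
        ({s(u, v), s(u, x), s(u, y), s(v, x), s(v, y), s(x, y)} : Finset (Sym2 V)) := by
      intro g hg
      rw [mem_InnQ] at hg
      obtain ⟨hgK, hall⟩ := hg
      obtain ⟨p, q, rfl⟩ := sym2_rep g
      have hadj : G.Adj p q := G.mem_edgeSet.mp (hK.edge _ hgK)
      have hP := hall p (by rw [Sym2.mem_iff]; left; rfl)
      have hQ := hall q (by rw [Sym2.mem_iff]; right; rfl)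
      exact innq_cases hadj hP hQ
    exact (Finset.card_le_card hsub).trans (card_le_six _ _ _ _ _ _)
  -- split
  have hKsub : K ⊆ InnQ K u v x y ∪ OutQ K u v x y u ∪ OutQ K u v x y v ∪
      OutQ K u v x y x ∪ OutQ K u v x y y := by
    intro g hg
    simp only [Finset.mem_union]
    by_cases hall : ∀ t ∈ g, QP u v x y t
    · exact Or.inl (Or.inl (Or.inl (Or.inl (mem_InnQ.mpr ⟨hg, hall⟩))))
    · have hOm : ∀ s, s ∈ g → g ∈ OutQ K u v x y s := by
        intro s hs
        exact mem_OutQ.mpr ⟨hg, hs, hall⟩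
      rcases hQcov g hg with h | h | h | h
      · exact Or.inl (Or.inl (Or.inl (Or.inr (hOm _ h))))
      · exact Or.inl (Or.inl (Or.inr (hOm _ h)))
      · exact Or.inl (Or.inr (hOm _ h))
      · exact Or.inr (hOm _ h)
  have hcount : K.card ≤ (InnQ K u v x y).card + (OutQ K u v x y u).card +
      (OutQ K u v x y v).card + (OutQ K u v x y x).card + (OutQ K u v x y y).card :=
    (Finset.card_le_card hKsub).trans (card_union5_le _ _ _ _ _)
  have hou := hOut2 u (Or.inl rfl)
  have hov := hOut2 v (Or.inr (Or.inl rfl))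
  have hox := hOut2 x (Or.inr (Or.inr (Or.inl rfl)))
  have hoy := hOut2 y (Or.inr (Or.inr (Or.inr rfl)))
  -- the final contradiction
  have hgetO : ∀ s : V, QP u v x y s → ∀ g, g ∈ OutQ K u v x y s →
      ∃ z : V, g = s(s, z) ∧ g ∈ K ∧ (z ≠ u ∧ z ≠ v ∧ z ≠ x ∧ z ≠ y) := by
    intro s hPs g hg
    rw [mem_OutQ] at hg
    obtain ⟨hgK, hsg, hnall⟩ := hg
    push_neg at hnall
    obtain ⟨z, hzg, hzP⟩ := hnall
    have hzs : s ≠ z := fun h => hzP (h ▸ hPs)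
    have hz4 : z ≠ u ∧ z ≠ v ∧ z ≠ x ∧ z ≠ y := by
      simp only [QP] at hzP
      push_neg at hzP
      exact hzP
    exact ⟨z, sym2_eq_of_mems hsg hzg hzs, hgK, hz4⟩
  -- a double-outer at r plus an outer at r' (with {r,r'} = {x,y}) is impossible
  have hfinal : ∀ r r' : V, QP u v x y r → QP u v x y r' →
      r ≠ u → r ≠ v → r' ≠ u → r' ≠ v → r ≠ r' →
      2 ≤ (OutQ K u v x y r).card → 1 ≤ (OutQ K u v x y r').card → False := by
    intro r r' hPr hPr' hru hrv hr'u hr'v hrr' h2 h1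
    have hlt : 1 < (OutQ K u v x y r).card := by omega
    obtain ⟨g1, hg1, g2, hg2, hne⟩ := Finset.one_lt_card.mp hlt
    obtain ⟨t1, rfl, hK1, ht1⟩ := hgetO r hPr _ hg1
    obtain ⟨t2, rfl, hK2, ht2⟩ := hgetO r hPr _ hg2
    have ht12 : t1 ≠ t2 := fun h => hne (by rw [h])
    have hpos : 0 < (OutQ K u v x y r').card := by omega
    obtain ⟨g3, hg3⟩ := Finset.card_pos.mp hpos
    obtain ⟨ζ, rfl, hK3, hζ⟩ := hgetO r' hPr' _ hg3
    -- r, r' ∈ {x, y}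
    have hrxy : r = x ∨ r = y := by
      rcases hPr with h | h | h | h <;> tauto
    have hr'xy : r' = x ∨ r' = y := by
      rcases hPr' with h | h | h | h <;> tauto
    have hζt : ∀ t : V, (t ≠ u ∧ t ≠ v ∧ t ≠ x ∧ t ≠ y) → s(r, t) ∈ K → ζ = t := by
      intro t ht hKt
      have hde : EdgeDisjoint s(u, v) s(r, t) := by
        rw [edgeDisjoint_iff]
        exact ⟨fun h => hru h.symm, fun h => ht.1 h.symm, fun h => hrv h.symm,
          fun h => ht.2.1 h.symm⟩
      have hd3e : EdgeDisjoint s(r', ζ) s(u, v) := by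
        rw [edgeDisjoint_iff]
        exact ⟨hr'u, hr'v, hζ.1, hζ.2.1⟩
      by_cases hd3t : EdgeDisjoint s(r', ζ) s(r, t)
      · exact absurd (hno3 _ _ _ hK3 he hKt hd3e hd3t hde) id
      · have : ∃ w, w ∈ s(r', ζ) ∧ w ∈ s(r, t) := by
          by_contra hcon
          push_neg at hcon
          exact hd3t (fun w hw hw' => hcon w hw hw')
        obtain ⟨w, hw, hw'⟩ := this
        rw [Sym2.mem_iff] at hw hw'
        rcases hw with rfl | rfl
        · rcases hw' with h | h
          · exact absurd h hrr'.symm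
          · exfalso
            rcases hr'xy with rfl | rfl
            · exact ht.2.2.1 h.symm
            · exact ht.2.2.2 h.symm
        · rcases hw' with h | h
          · exfalso
            rcases hrxy with rfl | rfl
            · exact hζ.2.2.1 h
            · exact hζ.2.2.2 h
          · exact h
    have e1 := hζt t1 ht1 hK1
    have e2 := hζt t2 ht2 hK2
    exact ht12 (e1 ▸ e2)
  have h13 : 13 ≤ K.card := by omega
  have hsum : 3 ≤ (OutQ K u v x y x).card + (OutQ K u v x y y).card := by omega
  by_cases h2 : 2 ≤ (OutQ K u v x y x).card
  · have h1 : 1 ≤ (OutQ K u v x y y).card := by omega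
    exact hfinal x y (Or.inr (Or.inr (Or.inl rfl))) (Or.inr (Or.inr (Or.inr rfl)))
      n1.symm n3.symm n2.symm n4.symm (G.mem_edgeSet.mp (hK.edge _ hf)).ne h2 h1
  · have h2' : 2 ≤ (OutQ K u v x y y).card := by omega
    have h1 : 1 ≤ (OutQ K u v x y x).card := by omega
    exact hfinal y x (Or.inr (Or.inr (Or.inr rfl))) (Or.inr (Or.inr (Or.inl rfl)))
      n2.symm n4.symm n1.symm n3.symm (G.mem_edgeSet.mp (hK.edge _ hf)).ne.symm h2' h1

end Aux

open Aux in
theorem cliqueNum_Lplus_planar_le {V : Type*} [Fintype V] [DecidableEq V]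
    (G : SimpleGraph V) [DecidableRel G.Adj] (hG : IsPlanar G) (hΔ : 6 ≤ G.maxDegree) :
    (Lplus G).cliqueNum ≤ 2 * G.maxDegree := by
  classical
  obtain ⟨h5, h33⟩ := hG
  have key : ∀ t : Finset ↥G.edgeSet, (Lplus G).IsClique (↑t : Set ↥G.edgeSet) →
      t.card ≤ 2 * G.maxDegree := by
    intro t ht
    by_contra hlt
    push_neg at hlt
    set K : Finset (Sym2 V) := t.image Subtype.val with hKdef
    have hcard : 2 * G.maxDegree + 1 ≤ K.card := by
      rw [hKdef, Finset.card_image_of_injective _ Subtype.val_injective]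
      omega
    have hK : GoodClique G K := by
      constructor
      · intro g hg
        rw [hKdef, Finset.mem_image] at hg
        obtain ⟨w, _, rfl⟩ := hg
        exact w.2
      · intro g hg h hh hne
        rw [hKdef, Finset.mem_image] at hg hh
        obtain ⟨u, hu, rfl⟩ := hg
        obtain ⟨w, hw, rfl⟩ := hh
        have hne' : u ≠ w := fun hq => hne (by rw [hq])
        have hadj := ht (Finset.mem_coe.mpr hu) (Finset.mem_coe.mpr hw) hne'
        simp only [Lplus, fromRel_adj] at hadj
        rcases hadj.2 with (hsh | ho) | (hsh | ho)
        · exact Or.inl hsh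
        · exact Or.inr (Or.inl ho)
        · obtain ⟨z, hz1, hz2⟩ := hsh
          exact Or.inl ⟨z, hz2, hz1⟩
        · exact Or.inr (Or.inr ho)
    have hEp : ∀ p : V, (K.filter (fun g => p ∈ g)).card ≤ G.maxDegree := by
      intro p
      have hsub : K.filter (fun g => p ∈ g) ⊆ G.incidenceFinset p := by
        intro g hg
        rw [Finset.mem_filter] at hg
        rw [SimpleGraph.mem_incidenceFinset]
        exact ⟨hK.edge _ hg.1, hg.2⟩
      calc (K.filter (fun g => p ∈ g)).card ≤ (G.incidenceFinset p).card :=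
            Finset.card_le_card hsub
        _ = G.degree p := G.card_incidenceFinset_eq_degree p
        _ ≤ G.maxDegree := G.degree_le_maxDegree p
    by_cases h3 : ∃ g1 ∈ K, ∃ g2 ∈ K, ∃ g3 ∈ K,
        EdgeDisjoint g1 g2 ∧ EdgeDisjoint g1 g3 ∧ EdgeDisjoint g2 g3
    · obtain ⟨g1, m1, g2, m2, g3, m3, d12, d13, d23⟩ := h3
      exact nu3 hK h33 h5 m1 m2 m3 d12 d13 d23 (by omega)
    · have hno3 : ∀ g1 g2 g3 : Sym2 V, g1 ∈ K → g2 ∈ K → g3 ∈ K → EdgeDisjoint g1 g2 →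
          EdgeDisjoint g1 g3 → EdgeDisjoint g2 g3 → False := by
        intro g1 g2 g3 m1 m2 m3 d12 d13 d23
        exact h3 ⟨g1, m1, g2, m2, g3, m3, d12, d13, d23⟩
      by_cases h2 : ∃ e ∈ K, ∃ f ∈ K, EdgeDisjoint e f
      · obtain ⟨e, hme, f, hmf, hd⟩ := h2
        obtain ⟨u, v, rfl⟩ := sym2_rep e
        obtain ⟨x, y, rfl⟩ := sym2_rep f
        exact nu2 hK hme hmf hd hno3 hcard hΔ
      · push_neg at h2
        have hne : K.Nonempty := Finset.card_pos.mp (by omega)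
        obtain ⟨g0, hg0⟩ := hne
        obtain ⟨c, c', rfl⟩ := sym2_rep g0
        have hsub : K ⊆ K.filter (fun g => c ∈ g) ∪ K.filter (fun g => c' ∈ g) := by
          intro g hg
          have hnd := h2 g hg _ hg0
          have hex : ∃ w, w ∈ g ∧ w ∈ s(c, c') := by
            by_contra hcon
            push_neg at hcon
            exact hnd (fun w hw hw' => hcon w hw hw')
          obtain ⟨w, hw, hw'⟩ := hex
          rw [Sym2.mem_iff] at hw'
          rw [Finset.mem_union, Finset.mem_filter, Finset.mem_filter]
          rcases hw' with rfl | rfl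
          · exact Or.inl ⟨hg, hw⟩
          · exact Or.inr ⟨hg, hw⟩
        have hcu := (Finset.card_le_card hsub).trans (Finset.card_union_le _ _)
        have hc1 := hEp c
        have hc2 := hEp c'
        omega
  have hne : {n | ∃ s, (Lplus G).IsNClique n s}.Nonempty := by
    refine ⟨0, ∅, ?_⟩
    rw [SimpleGraph.isNClique_iff]
    exact ⟨by simp [SimpleGraph.IsClique], by simp⟩
  have hdef : (Lplus G).cliqueNum = sSup {n | ∃ s, (Lplus G).IsNClique n s} := rfl
  rw [hdef]
  apply csSup_le hne
  rintro n ⟨t, hnt⟩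
  rw [SimpleGraph.isNClique_iff] at hnt
  obtain ⟨hcl, hcd⟩ := hnt
  rw [← hcd]
  exact key t hcl
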